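/- arXiv:1710.09263 — 4 statements merged into one kernel-verified Lean document; each statement's English description precedes it below -/
import Mathlib

section
/- Let (W, W') be an exchangeable pair of real-valued square-integrable random variables satisfying the linear regression condition E[W' - W | W] = -λW for some λ > 0. Then for every bounded measurable function f: ℝ → ℝ, E[W f(W)] = (1/(2λ)) E[(f(W) - f(W'))(W - W')]. -/
open MeasureTheory ProbabilityTheory

/-- Stein's exchangeable pair identity: if `(W, W')` is an exchangeable pair of
square-integrable random variables with `E[W' - W | W] = -λ W`, then for every bounded
measurable `f`, `E[W f(W)] = (1/(2λ)) E[(f(W) - f(W'))(W - W')]`. -/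
theorem stmt0 {Ω : Type*} [MeasurableSpace Ω] (μ : Measure Ω) [IsProbabilityMeasure μ]
    (W W' : Ω → ℝ) (hW : Measurable W) (hW' : Measurable W')
    (hW2 : MemLp W 2 μ) (hW'2 : MemLp W' 2 μ)
    (hexch : IdentDistrib (fun ω => (W ω, W' ω)) (fun ω => (W' ω, W ω)) μ μ)
    (lam : ℝ) (hlam : 0 < lam)
    (hreg : μ[fun ω => W' ω - W ω | MeasurableSpace.comap W inferInstance]
      =ᵐ[μ] fun ω => -lam * W ω)
    (f : ℝ → ℝ) (hf : Measurable f) (C : ℝ) (hfb : ∀ x, |f x| ≤ C) :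
    ∫ ω, W ω * f (W ω) ∂μ
      = (1 / (2 * lam)) * ∫ ω, (f (W ω) - f (W' ω)) * (W ω - W' ω) ∂μ := by
  have hmle : MeasurableSpace.comap W inferInstance ≤ _ := hW.comap_le
  have hWint : Integrable W μ := hW2.integrable (by norm_num)
  have hW'int : Integrable W' μ := hW'2.integrable (by norm_num)
  have hdint : Integrable (fun ω => W' ω - W ω) μ := hW'int.sub hWint
  have hfWm : Measurable[MeasurableSpace.comap W inferInstance] (fun ω => f (W ω)) := by
    intro s hs
    exact ⟨f ⁻¹' s, hf hs, rfl⟩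
  have hfWsm : StronglyMeasurable[MeasurableSpace.comap W inferInstance] (fun ω => f (W ω)) := hfWm.stronglyMeasurable
  have hfWbdd : ∀ᵐ ω ∂μ, ‖f (W ω)‖ ≤ C := Filter.Eventually.of_forall fun ω => hfb _
  -- integrability of products
  have hprod : Integrable (fun ω => f (W ω) * (W' ω - W ω)) μ :=
    hdint.bdd_mul ((hfWsm.mono hmle).aestronglyMeasurable) hfWbdd
  -- conditional expectation pull-out
  have hkey : ∫ ω, f (W ω) * (W' ω - W ω) ∂μ = ∫ ω, f (W ω) * (-lam * W ω) ∂μ := by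
    have h1 : μ[(fun ω => f (W ω)) * (fun ω => W' ω - W ω) | MeasurableSpace.comap W inferInstance]
        =ᵐ[μ] (fun ω => f (W ω)) * μ[(fun ω => W' ω - W ω) | MeasurableSpace.comap W inferInstance] :=
      condExp_stronglyMeasurable_mul_of_bound hmle hfWsm hdint C hfWbdd
    have h2 : (fun ω => f (W ω)) * μ[(fun ω => W' ω - W ω) | MeasurableSpace.comap W inferInstance]
        =ᵐ[μ] fun ω => f (W ω) * (-lam * W ω) := by
      filter_upwards [hreg] with ω hω
      simp [hω]
    have h0 : ∫ ω, ((fun ω => f (W ω)) * (fun ω => W' ω - W ω)) ω ∂μ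
        = ∫ ω, (μ[(fun ω => f (W ω)) * (fun ω => W' ω - W ω) | MeasurableSpace.comap W inferInstance]) ω ∂μ :=
      (integral_condExp hmle).symm
    have h4 := h0.trans (integral_congr_ae (h1.trans h2))
    simpa using h4
  -- exchangeability: ∫ f(W)(W-W') = ∫ f(W')(W'-W)
  have hid : IdentDistrib (fun ω => f (W ω) * (W ω - W' ω))
      (fun ω => f (W' ω) * (W' ω - W ω)) μ μ :=
    hexch.comp (u := fun p : ℝ × ℝ => f p.1 * (p.1 - p.2)) (by fun_prop)
  have hswap : ∫ ω, f (W ω) * (W ω - W' ω) ∂μ = ∫ ω, f (W' ω) * (W' ω - W ω) ∂μ :=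
    hid.integral_eq
  -- integrability pieces for the expansion
  have hdint' : Integrable (fun ω => W ω - W' ω) μ := hWint.sub hW'int
  have hprod1 : Integrable (fun ω => f (W ω) * (W ω - W' ω)) μ :=
    hdint'.bdd_mul ((hfWsm.mono hmle).aestronglyMeasurable) hfWbdd
  have hfW'b : ∀ᵐ ω ∂μ, ‖f (W' ω)‖ ≤ C := Filter.Eventually.of_forall fun ω => hfb _
  have hprod2 : Integrable (fun ω => f (W' ω) * (W ω - W' ω)) μ :=
    hdint'.bdd_mul ((hf.comp hW').aestronglyMeasurable) hfW'b
  have hexpand : ∫ ω, (f (W ω) - f (W' ω)) * (W ω - W' ω) ∂μ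
      = 2 * ∫ ω, f (W ω) * (W ω - W' ω) ∂μ := by
    have : ∫ ω, (f (W ω) - f (W' ω)) * (W ω - W' ω) ∂μ
        = ∫ ω, f (W ω) * (W ω - W' ω) ∂μ - ∫ ω, f (W' ω) * (W ω - W' ω) ∂μ := by
      rw [← integral_sub hprod1 hprod2]
      congr 1; ext ω; ring
    rw [this]
    have h3 : ∫ ω, f (W' ω) * (W ω - W' ω) ∂μ = - ∫ ω, f (W' ω) * (W' ω - W ω) ∂μ := by
      rw [← integral_neg]; congr 1; ext ω; ring
    rw [h3, hswap]; ring
  -- relate ∫ f(W)(W-W') to ∫ W f(W)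
  have hneg : ∫ ω, f (W ω) * (W ω - W' ω) ∂μ = - ∫ ω, f (W ω) * (W' ω - W ω) ∂μ := by
    rw [← integral_neg]; congr 1; ext ω; ring
  have hlin : ∫ ω, f (W ω) * (-lam * W ω) ∂μ = -lam * ∫ ω, W ω * f (W ω) ∂μ := by
    rw [← integral_const_mul]; congr 1; ext ω; ring
  rw [hexpand, hneg, hkey, hlin]
  field_simp
end

section
/- Let n ≥ 2, let {X_{i,j} : i, j ∈ {1,…,n}} be an array of independent real random variables with E[X_{i,j}] = c_{ij}, Var(X_{i,j}) = σ_{ij}^2, and suppose the row and column averages of the means vanish: for every i, Σ_{j=1}^n c_{ij} = 0, and for every j, Σ_{i=1}^n c_{ij} = 0. Let π be a uniformly random permutation of {1,…,n}, independent of the array. Then Var(Σ_{i=1}^n X_{i,π(i)}) = (1/n) Σ_{i,j=1}^n σ_{ij}^2 + (1/(n-1)) Σ_{i,j=1}^n c_{ij}^2. -/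
open MeasureTheory ProbabilityTheory
open scoped ENNReal NNReal

instance {n : ℕ} : MeasurableSpace (Equiv.Perm (Fin n)) := ⊤

namespace CLTAux

open Finset

variable {α : Type*} [DecidableEq α] [Fintype α]

theorem L2mul {Ω : Type*} [MeasurableSpace Ω] {μ : Measure Ω}
    {f g : Ω → ℝ} (hf : MemLp f 2 μ) (hg : MemLp g 2 μ) :
    Integrable (fun ω => f ω * g ω) μ := by
  rw [← memLp_one_iff_integrable]
  exact MemLp.smul (p := 2) (q := 2) (r := 1) hg hf (hpqr := ⟨by simp [ENNReal.inv_two_add_inv_two]⟩)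

theorem exists_perm_two {i k j l : α} (hik : i ≠ k) (hjl : j ≠ l) :
    ∃ σ : Equiv.Perm α, σ i = j ∧ σ k = l := by
  refine ⟨(Equiv.swap (Equiv.swap i j k) l) * Equiv.swap i j, ?_, ?_⟩
  · have h1 : Equiv.swap i j k ≠ j := by
      rcases eq_or_ne k j with rfl | h
      · rw [Equiv.swap_apply_right]
        rintro rfl; exact hik rfl
      · rw [Equiv.swap_apply_of_ne_of_ne (Ne.symm hik) h]; exact h
    simp only [Equiv.Perm.mul_apply, Equiv.swap_apply_left]
    exact Equiv.swap_apply_of_ne_of_ne (Ne.symm h1) hjl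
  · simp only [Equiv.Perm.mul_apply, Equiv.swap_apply_left]

/-- fiber for pairs -/
def fib2 (i k j l : α) : Finset (Equiv.Perm α) :=
  Finset.univ.filter fun σ => σ i = j ∧ σ k = l

/-- fiber for singles -/
def fib1 (i j : α) : Finset (Equiv.Perm α) :=
  Finset.univ.filter fun σ => σ i = j

theorem fib2_card_eq {i k j l j' l' : α} (hjl : j ≠ l) (hjl' : j' ≠ l') :
    (fib2 i k j l).card = (fib2 i k j' l').card := by
  obtain ⟨τ, hτ1, hτ2⟩ := exists_perm_two hjl hjl'
  apply Finset.card_bij' (fun σ _ => τ * σ) (fun σ _ => τ⁻¹ * σ)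
  · intro σ hσ
    simp only [fib2, Finset.mem_filter, Finset.mem_univ, true_and] at hσ ⊢
    simp [Equiv.Perm.mul_apply, hσ.1, hσ.2, hτ1, hτ2]
  · intro σ hσ
    simp only [fib2, Finset.mem_filter, Finset.mem_univ, true_and] at hσ ⊢
    constructor
    · simp only [Equiv.Perm.mul_apply, hσ.1, ← hτ1]; simp
    · simp only [Equiv.Perm.mul_apply, hσ.2, ← hτ2]; simp
  · intro σ _; simp [mul_assoc]
  · intro σ _; simp [mul_assoc]

theorem fib1_card_eq (i : α) (j j' : α) : (fib1 i j).card = (fib1 i j').card := by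
  apply Finset.card_bij' (fun σ _ => Equiv.swap j j' * σ) (fun σ _ => Equiv.swap j j' * σ)
  · intro σ hσ
    simp only [fib1, Finset.mem_filter, Finset.mem_univ, true_and] at hσ ⊢
    simp [Equiv.Perm.mul_apply, hσ]
  · intro σ hσ
    simp only [fib1, Finset.mem_filter, Finset.mem_univ, true_and] at hσ ⊢
    simp [Equiv.Perm.mul_apply, hσ]
  · intro σ _; simp [← mul_assoc]
  · intro σ _; simp [← mul_assoc]

theorem fib2_sum {i k : α} (hik : i ≠ k) (g : α → α → ℝ) :
    ∑ σ : Equiv.Perm α, g (σ i) (σ k)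
      = ∑ p ∈ Finset.univ.offDiag, ((fib2 i k p.1 p.2).card : ℝ) * g p.1 p.2 := by
  rw [← Finset.sum_fiberwise_of_maps_to (t := (Finset.univ : Finset α).offDiag)
      (g := fun σ : Equiv.Perm α => (σ i, σ k)) (fun σ _ => by
        simp [Finset.mem_offDiag, hik]) (fun σ => g (σ i) (σ k))]
  refine Finset.sum_congr rfl fun p hp => ?_
  rw [Finset.sum_congr rfl (g := fun _ => g p.1 p.2) (fun σ hσ => by
      simp only [Finset.mem_filter, Prod.ext_iff] at hσ
      rw [hσ.2.1, hσ.2.2]), Finset.sum_const, nsmul_eq_mul]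
  congr 1
  simp [fib2, Prod.ext_iff]

theorem fib1_sum (i : α) (f : α → ℝ) :
    ∑ σ : Equiv.Perm α, f (σ i) = ∑ j, ((fib1 i j).card : ℝ) * f j := by
  rw [← Finset.sum_fiberwise_of_maps_to (t := (Finset.univ : Finset α))
      (g := fun σ : Equiv.Perm α => σ i) (fun σ _ => Finset.mem_univ _)
      (fun σ => f (σ i))]
  refine Finset.sum_congr rfl fun j hj => ?_
  rw [Finset.sum_congr rfl (g := fun _ => f j) (fun σ hσ => by
      simp only [Finset.mem_filter] at hσ
      rw [hσ.2]), Finset.sum_const, nsmul_eq_mul]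
  rfl

theorem fib2_card_mul {i k j l : α} (hik : i ≠ k) (hjl : j ≠ l) :
    ((fib2 i k j l).card : ℝ) * (Fintype.card α * (Fintype.card α - 1) : ℕ)
      = ((Fintype.card α).factorial : ℝ) := by
  have h := fib2_sum hik (fun _ _ => (1 : ℝ))
  simp only [mul_one, Finset.sum_const, Finset.card_univ, nsmul_eq_mul] at h
  have h2 : ∀ p ∈ (Finset.univ : Finset α).offDiag,
      ((fib2 i k p.1 p.2).card : ℝ) = ((fib2 i k j l).card : ℝ) := fun p hp => by
    rw [Finset.mem_offDiag] at hp
    exact Nat.cast_inj.mpr (fib2_card_eq hp.2.2 hjl)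
  rw [Finset.sum_congr rfl h2, Finset.sum_const, nsmul_eq_mul] at h
  have hod : (Finset.univ : Finset α).offDiag.card
      = (Fintype.card α * (Fintype.card α - 1) : ℕ) := by
    rw [Finset.offDiag_card, Finset.card_univ, ← Nat.pred_eq_sub_one, Nat.mul_pred]
  rw [Fintype.card_perm, hod] at h
  rw [h]; ring

theorem fib1_card_mul (i j : α) :
    ((fib1 i j).card : ℝ) * (Fintype.card α : ℕ) = ((Fintype.card α).factorial : ℝ) := by
  have h := fib1_sum i (fun _ => (1 : ℝ))
  simp only [mul_one, Finset.sum_const, Finset.card_univ, nsmul_eq_mul] at h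
  have h2 : ∀ j' ∈ (Finset.univ : Finset α), ((fib1 i j').card : ℝ) = ((fib1 i j).card : ℝ) :=
    fun j' _ => Nat.cast_inj.mpr (fib1_card_eq i j' j)
  rw [Finset.sum_congr rfl h2, Finset.sum_const, Finset.card_univ, nsmul_eq_mul] at h
  rw [Fintype.card_perm] at h
  rw [h]; ring

theorem sum_offDiag (F : α → α → ℝ) :
    ∑ p ∈ (Finset.univ : Finset α).offDiag, F p.1 p.2
      = (∑ j, ∑ l, F j l) - ∑ j, F j j := by
  have h : ∑ p ∈ (Finset.univ : Finset α) ×ˢ Finset.univ, F p.1 p.2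
      = ∑ p ∈ (Finset.univ : Finset α).diag, F p.1 p.2
        + ∑ p ∈ (Finset.univ : Finset α).offDiag, F p.1 p.2 := by
    rw [← Finset.sum_union (Finset.disjoint_diag_offDiag _), Finset.diag_union_offDiag]
  rw [Finset.sum_product] at h
  rw [Finset.sum_diag (f := fun p => F p.1 p.2)] at h
  rw [h]; ring

/-- Decomposition of the integral of `ω ↦ Y (π ω) ω` by conditioning on `π`. -/
theorem integral_perm_comp {Ω : Type*} [MeasurableSpace Ω] {μ : Measure Ω}
    [IsProbabilityMeasure μ] {n : ℕ} {π : Ω → Equiv.Perm (Fin n)} (hπm : Measurable π)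
    (Y : Equiv.Perm (Fin n) → Ω → ℝ) (hY : ∀ σ, Integrable (Y σ) μ)
    (hind : ∀ σ, IndepFun (Y σ) π μ) :
    ∫ ω, Y (π ω) ω ∂μ
      = ∑ σ : Equiv.Perm (Fin n), (μ (π ⁻¹' {σ})).toReal * ∫ ω, Y σ ω ∂μ := by
  have hmeas : ∀ σ : Equiv.Perm (Fin n), MeasurableSet (π ⁻¹' {σ}) :=
    fun σ => hπm (show MeasurableSet {σ} from MeasurableSpace.measurableSet_top)
  have key : ∀ ω, ∑ σ : Equiv.Perm (Fin n), Set.indicator (π ⁻¹' {σ}) (Y σ) ω = Y (π ω) ω := by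
    intro ω
    rw [Finset.sum_eq_single (π ω)]
    · simp [Set.indicator_apply]
    · intro σ _ h
      simp [Set.indicator_apply, Set.mem_preimage, Ne.symm h]
    · simp
  have hpt : (fun ω => Y (π ω) ω)
      = fun ω => ∑ σ : Equiv.Perm (Fin n), Set.indicator (π ⁻¹' {σ}) (Y σ) ω := by
    funext ω; exact (key ω).symm
  rw [hpt, integral_finset_sum _ (fun σ _ => (hY σ).indicator (hmeas σ))]
  refine Finset.sum_congr rfl fun σ _ => ?_
  have hprod : (fun ω => Set.indicator (π ⁻¹' {σ}) (Y σ) ω)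
      = (fun ω => Set.indicator (π ⁻¹' {σ}) (1 : Ω → ℝ) ω) * (fun ω => Y σ ω) := by
    funext ω
    by_cases h : ω ∈ π ⁻¹' {σ} <;> simp [Set.indicator_apply, h]
  have hindep2 : IndepFun (fun ω => Set.indicator (π ⁻¹' {σ}) (1 : Ω → ℝ) ω)
      (fun ω => Y σ ω) μ := by
    have hcomp := IndepFun.comp (hind σ) (measurable_id (α := ℝ))
      (measurable_from_top (f := fun τ : Equiv.Perm (Fin n) => if τ = σ then (1:ℝ) else 0))
    have : ((fun τ : Equiv.Perm (Fin n) => if τ = σ then (1:ℝ) else 0) ∘ π)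
        = fun ω => Set.indicator (π ⁻¹' {σ}) (1 : Ω → ℝ) ω := by
      funext ω
      by_cases h : π ω = σ <;>
        simp [Function.comp, Set.indicator_apply, Set.mem_preimage, h]
    rw [this] at hcomp
    exact hcomp.symm
  rw [hprod, hindep2.integral_mul_eq_mul_integral
      ((measurable_one.indicator (hmeas σ)).aestronglyMeasurable) (hY σ).1]
  congr 1
  exact integral_indicator_one (hmeas σ)

end CLTAux

set_option maxHeartbeats 2000000

/-- Variance formula in the combinatorial CLT with a random array:
`Var(Σᵢ X_{i,π(i)}) = (1/n) Σ_{i,j} σ_{ij}² + (1/(n-1)) Σ_{i,j} c_{ij}²`. -/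
theorem stmt2 {Ω : Type*} [MeasurableSpace Ω] (μ : Measure Ω) [IsProbabilityMeasure μ]
    (n : ℕ) (hn : 2 ≤ n)
    (X : Fin n → Fin n → Ω → ℝ) (hXm : ∀ i j, Measurable (X i j))
    (hX2 : ∀ i j, MemLp (X i j) 2 μ)
    (c σsq : Fin n → Fin n → ℝ)
    (hc : ∀ i j, ∫ ω, X i j ω ∂μ = c i j)
    (hσ : ∀ i j, variance (X i j) μ = σsq i j)
    (hrow : ∀ i, ∑ j, c i j = 0) (hcol : ∀ j, ∑ i, c i j = 0)
    (hindep : iIndepFun (fun p : Fin n × Fin n => X p.1 p.2) μ)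
    (π : Ω → Equiv.Perm (Fin n)) (hπm : Measurable π)
    (hπu : ∀ σ : Equiv.Perm (Fin n), μ (π ⁻¹' {σ}) = ((Nat.factorial n : ℝ≥0∞))⁻¹)
    (hπind : IndepFun (fun ω (p : Fin n × Fin n) => X p.1 p.2 ω) π μ) :
    variance (fun ω => ∑ i, X i (π ω i) ω) μ
      = (1 / (n : ℝ)) * ∑ i, ∑ j, σsq i j
        + (1 / ((n : ℝ) - 1)) * ∑ i, ∑ j, (c i j) ^ 2 := by
  classical
  open CLTAux Finset in
  -- basic notation
  set Y : Equiv.Perm (Fin n) → Ω → ℝ := fun σ ω => ∑ i, X i (σ i) ω with hY_def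
  have hY2 : ∀ σ, MemLp (Y σ) 2 μ := fun σ =>
    memLp_finset_sum _ (fun i _ => hX2 i (σ i))
  have hYint : ∀ σ, Integrable (Y σ) μ := fun σ => (hY2 σ).integrable one_le_two
  have hYsqint : ∀ σ, Integrable (fun ω => Y σ ω ^ 2) μ := fun σ => (hY2 σ).integrable_sq
  -- independence of Y σ (and its square) from π
  have hAm : Measurable (fun ω (p : Fin n × Fin n) => X p.1 p.2 ω) :=
    measurable_pi_lambda _ (fun p => hXm p.1 p.2)
  have hindY : ∀ σ, IndepFun (Y σ) π μ := by
    intro σ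
    have hf : Measurable (fun v : Fin n × Fin n → ℝ => ∑ i, v (i, σ i)) :=
      Finset.measurable_sum _ (fun i _ => measurable_pi_apply _)
    have := IndepFun.comp hπind hf (measurable_id (α := Equiv.Perm (Fin n)))
    exact this
  have hindYsq : ∀ σ, IndepFun (fun ω => Y σ ω ^ 2) π μ := by
    intro σ
    have hsum : Measurable (fun v : Fin n × Fin n → ℝ => ∑ i, v (i, σ i)) :=
      Finset.measurable_sum _ (fun i _ => measurable_pi_apply _)
    have hf : Measurable (fun v : Fin n × Fin n → ℝ => (∑ i, v (i, σ i)) ^ 2) :=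
      hsum.pow_const 2
    have := IndepFun.comp hπind hf (measurable_id (α := Equiv.Perm (Fin n)))
    exact this
  -- probability weights
  have hw : ∀ σ : Equiv.Perm (Fin n), (μ (π ⁻¹' {σ})).toReal = ((n.factorial : ℝ))⁻¹ := by
    intro σ
    rw [hπu σ, ENNReal.toReal_inv]
    norm_num
  have hfac_pos : (0:ℝ) < (n.factorial : ℝ) := by positivity
  -- S is MemLp 2
  have hmeasσ : ∀ σ : Equiv.Perm (Fin n), MeasurableSet (π ⁻¹' {σ}) :=
    fun σ => hπm (show MeasurableSet {σ} from MeasurableSpace.measurableSet_top)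
  have hS2 : MemLp (fun ω => ∑ i, X i (π ω i) ω) 2 μ := by
    have key : ∀ ω, ∑ σ : Equiv.Perm (Fin n), Set.indicator (π ⁻¹' {σ}) (Y σ) ω
        = ∑ i, X i (π ω i) ω := by
      intro ω
      rw [Finset.sum_eq_single (π ω)]
      · simp [Set.indicator_apply, hY_def]
      · intro σ _ h
        simp [Set.indicator_apply, Set.mem_preimage, Ne.symm h]
      · simp
    have hpt : (fun ω => ∑ i, X i (π ω i) ω)
        = fun ω => ∑ σ : Equiv.Perm (Fin n), Set.indicator (π ⁻¹' {σ}) (Y σ) ω := by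
      funext ω; exact (key ω).symm
    rw [hpt]
    exact memLp_finset_sum _ (fun σ _ => (hY2 σ).indicator (hmeasσ σ))
  -- mean of Y σ
  have hEY : ∀ σ, ∫ ω, Y σ ω ∂μ = ∑ i, c i (σ i) := by
    intro σ
    rw [hY_def]
    rw [integral_finset_sum _ (fun i _ => (hX2 i (σ i)).integrable one_le_two)]
    exact Finset.sum_congr rfl fun i _ => hc i (σ i)
  -- second moment of Y σ
  have hEY2 : ∀ σ, ∫ ω, Y σ ω ^ 2 ∂μ
      = ∑ i, (σsq i (σ i) + c i (σ i) ^ 2)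
        + ∑ p ∈ (Finset.univ : Finset (Fin n)).offDiag, c p.1 (σ p.1) * c p.2 (σ p.2) := by
    intro σ
    have hsq : ∀ ω, Y σ ω ^ 2 = ∑ i, ∑ k, X i (σ i) ω * X k (σ k) ω := by
      intro ω
      rw [hY_def, sq, Finset.sum_mul_sum]
    simp_rw [hsq]
    rw [integral_finset_sum _ (fun i _ =>
      integrable_finset_sum _ (fun k _ => L2mul (hX2 i (σ i)) (hX2 k (σ k))))]
    have hterm : ∀ i k : Fin n, ∫ ω, X i (σ i) ω * X k (σ k) ω ∂μ
        = if i = k then σsq i (σ i) + c i (σ i) ^ 2 else c i (σ i) * c k (σ k) := by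
      intro i k
      rcases eq_or_ne i k with rfl | hik
      · rw [if_pos rfl]
        have h1 : ∫ ω, X i (σ i) ω * X i (σ i) ω ∂μ = ∫ ω, ((X i (σ i)) ^ 2) ω ∂μ := by
          congr 1; funext ω; simp [sq]
        have hvar := variance_eq_sub (hX2 i (σ i))
        have h2 : ∫ ω, ((X i (σ i)) ^ 2) ω ∂μ
            = variance (X i (σ i)) μ + (∫ ω, X i (σ i) ω ∂μ) ^ 2 := by
          rw [hvar]; ring
        rw [h1, h2, hσ i (σ i), hc i (σ i)]
      · simp only [if_neg hik]
        have hne : ((i, σ i) : Fin n × Fin n) ≠ (k, σ k) := by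
          simp [Prod.ext_iff]; intro h; exact absurd h hik
        have hind2 : IndepFun (X i (σ i)) (X k (σ k)) μ := hindep.indepFun hne
        have := hind2.integral_mul_eq_mul_integral (hXm i (σ i)).aestronglyMeasurable
          (hXm k (σ k)).aestronglyMeasurable
        rw [show (fun ω => X i (σ i) ω * X k (σ k) ω) = X i (σ i) * X k (σ k) from rfl, this,
          hc i (σ i), hc k (σ k)]
    simp_rw [integral_finset_sum _ (fun k _ => L2mul (hX2 _ _) (hX2 _ _))]
    rw [Finset.sum_congr rfl (fun i _ => Finset.sum_congr rfl (fun k _ => hterm i k))]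
    -- split diagonal and off-diagonal
    have hsplit := sum_offDiag (fun i k : Fin n =>
      if i = k then σsq i (σ i) + c i (σ i) ^ 2 else c i (σ i) * c k (σ k))
    have hdiag : ∑ i : Fin n, (if i = i then σsq i (σ i) + c i (σ i) ^ 2
        else c i (σ i) * c i (σ i)) = ∑ i, (σsq i (σ i) + c i (σ i) ^ 2) := by
      simp
    have hoff : ∑ p ∈ (Finset.univ : Finset (Fin n)).offDiag,
        (if p.1 = p.2 then σsq p.1 (σ p.1) + c p.1 (σ p.1) ^ 2
          else c p.1 (σ p.1) * c p.2 (σ p.2))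
        = ∑ p ∈ (Finset.univ : Finset (Fin n)).offDiag, c p.1 (σ p.1) * c p.2 (σ p.2) := by
      refine Finset.sum_congr rfl fun p hp => ?_
      rw [Finset.mem_offDiag] at hp
      rw [if_neg hp.2.2]
    rw [hoff, hdiag] at hsplit
    linarith [hsplit]
  -- expectation of S
  have hES : ∫ ω, (∑ i, X i (π ω i) ω) ∂μ = 0 := by
    have h := integral_perm_comp hπm Y hYint hindY
    have hSY : (fun ω => ∑ i, X i (π ω i) ω) = fun ω => Y (π ω) ω := rfl
    rw [hSY, h]
    simp_rw [hw, hEY]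
    rw [← Finset.mul_sum, Finset.sum_comm]
    have : ∀ i : Fin n, ∑ σ : Equiv.Perm (Fin n), c i (σ i) = 0 := by
      intro i
      rw [fib1_sum i (c i)]
      rw [Finset.sum_congr rfl (g := fun j => ((fib1 i i).card : ℝ) * c i j)
        (fun j _ => by rw [Nat.cast_inj.mpr (fib1_card_eq i j i)])]
      rw [← Finset.mul_sum, hrow i, mul_zero]
    rw [Finset.sum_congr rfl (fun i _ => this i), Finset.sum_const]
    simp
  -- second moment of S
  -- real number facts
  have hN2 : (2 : ℝ) ≤ (n : ℝ) := by exact_mod_cast hn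
  have hN0 : (n : ℝ) ≠ 0 := by linarith
  have hN1 : (n : ℝ) - 1 ≠ 0 := by linarith
  have hF0 : (n.factorial : ℝ) ≠ 0 := ne_of_gt hfac_pos
  -- fiber cardinalities
  have hm1 : ∀ i j : Fin n, ((fib1 i j).card : ℝ) = (n.factorial : ℝ) / (n : ℝ) := by
    intro i j
    have h := fib1_card_mul i j
    simp only [Fintype.card_fin] at h
    rw [eq_div_iff hN0]
    exact h
  have hm2 : ∀ (i k j l : Fin n), i ≠ k → j ≠ l →
      ((fib2 i k j l).card : ℝ) = (n.factorial : ℝ) / ((n : ℝ) * ((n : ℝ) - 1)) := by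
    intro i k j l hik hjl
    have h := fib2_card_mul hik hjl
    simp only [Fintype.card_fin] at h
    have h1n : (1 : ℕ) ≤ n := by omega
    have hcast : ((n * (n - 1) : ℕ) : ℝ) = (n : ℝ) * ((n : ℝ) - 1) := by
      rw [Nat.cast_mul, Nat.cast_sub h1n, Nat.cast_one]
    rw [hcast] at h
    rw [eq_div_iff (mul_ne_zero hN0 hN1)]
    exact h
  have hESsq : ∫ ω, (∑ i, X i (π ω i) ω) ^ 2 ∂μ
      = (1 / (n : ℝ)) * ∑ i, ∑ j, σsq i j
        + (1 / ((n : ℝ) - 1)) * ∑ i, ∑ j, (c i j) ^ 2 := by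
    have h' : ∫ ω, (∑ i, X i (π ω i) ω) ^ 2 ∂μ
        = ∑ σ : Equiv.Perm (Fin n), (μ (π ⁻¹' {σ})).toReal * ∫ ω, Y σ ω ^ 2 ∂μ :=
      integral_perm_comp hπm (fun σ ω => Y σ ω ^ 2) hYsqint hindYsq
    rw [h', Finset.sum_congr rfl (fun σ _ => by rw [hw σ, hEY2 σ]), ← Finset.mul_sum,
      Finset.sum_add_distrib]
    -- diagonal part
    have SA : ∑ σ : Equiv.Perm (Fin n), ∑ i, (σsq i (σ i) + c i (σ i) ^ 2)
        = ((n.factorial : ℝ) / (n : ℝ))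
            * ((∑ i, ∑ j, σsq i j) + ∑ i, ∑ j, c i j ^ 2) := by
      rw [Finset.sum_comm]
      have hi : ∀ i : Fin n, ∑ σ : Equiv.Perm (Fin n), (σsq i (σ i) + c i (σ i) ^ 2)
          = ((n.factorial : ℝ) / (n : ℝ)) * (∑ j, (σsq i j + c i j ^ 2)) := by
        intro i
        rw [fib1_sum i (fun j => σsq i j + c i j ^ 2),
          Finset.sum_congr rfl (fun j _ => by rw [hm1 i j]), ← Finset.mul_sum]
      rw [Finset.sum_congr rfl (fun i _ => hi i), ← Finset.mul_sum]
      congr 1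
      rw [← Finset.sum_add_distrib]
      exact Finset.sum_congr rfl fun i _ => Finset.sum_add_distrib
    -- off-diagonal part
    have h1 : ∀ i : Fin n, ∑ k : Fin n, ∑ j : Fin n, c i j * c k j = 0 := by
      intro i
      rw [Finset.sum_comm,
        Finset.sum_congr rfl (fun j _ => by rw [← Finset.mul_sum, hcol j, mul_zero])]
      simp
    have SB : ∑ σ : Equiv.Perm (Fin n),
          ∑ p ∈ (Finset.univ : Finset (Fin n)).offDiag, c p.1 (σ p.1) * c p.2 (σ p.2)
        = ((n.factorial : ℝ) / ((n : ℝ) * ((n : ℝ) - 1))) * ∑ i, ∑ j, c i j ^ 2 := by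
      rw [Finset.sum_comm]
      have hT : ∀ p ∈ (Finset.univ : Finset (Fin n)).offDiag,
          ∑ σ : Equiv.Perm (Fin n), c p.1 (σ p.1) * c p.2 (σ p.2)
          = ((n.factorial : ℝ) / ((n : ℝ) * ((n : ℝ) - 1)))
              * (- ∑ j, c p.1 j * c p.2 j) := by
        intro p hp
        rw [Finset.mem_offDiag] at hp
        have hcoef : ∀ q ∈ (Finset.univ : Finset (Fin n)).offDiag,
            ((fib2 p.1 p.2 q.1 q.2).card : ℝ) * (c p.1 q.1 * c p.2 q.2)
            = ((n.factorial : ℝ) / ((n : ℝ) * ((n : ℝ) - 1))) * (c p.1 q.1 * c p.2 q.2) := by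
          intro q hq
          rw [Finset.mem_offDiag] at hq
          rw [hm2 p.1 p.2 q.1 q.2 hp.2.2 hq.2.2]
        rw [fib2_sum hp.2.2 (fun j l => c p.1 j * c p.2 l),
          Finset.sum_congr rfl hcoef, ← Finset.mul_sum]
        congr 1
        rw [sum_offDiag (fun j l => c p.1 j * c p.2 l)]
        have hprod : ∑ j : Fin n, ∑ l : Fin n, c p.1 j * c p.2 l
            = (∑ j, c p.1 j) * (∑ l, c p.2 l) := by
          rw [Finset.sum_mul_sum]
        rw [hprod, hrow p.1]
        ring
      rw [Finset.sum_congr rfl hT, ← Finset.mul_sum]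
      congr 1
      rw [sum_offDiag (fun i k => - ∑ j, c i j * c k j)]
      have hz : ∑ i : Fin n, ∑ k : Fin n, (- ∑ j, c i j * c k j) = 0 := by
        rw [Finset.sum_congr rfl (fun i _ => by
          rw [Finset.sum_neg_distrib, h1 i, neg_zero])]
        simp
      have hd : ∑ i : Fin n, (- ∑ j, c i j * c i j) = - ∑ i, ∑ j, c i j ^ 2 := by
        rw [Finset.sum_neg_distrib]
        congr 1
        exact Finset.sum_congr rfl fun i _ =>
          Finset.sum_congr rfl fun j _ => (pow_two (c i j)).symm
      rw [hz, hd]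
      ring
    rw [SA, SB]
    field_simp
    ring
  -- conclude
  have hvar := variance_eq_sub hS2
  rw [hvar, hES]
  have : ∫ x, ((fun ω => ∑ i, X i (π ω i) ω) ^ 2) x ∂μ
      = ∫ ω, (∑ i, X i (π ω i) ω) ^ 2 ∂μ := rfl
  rw [this, hESsq]
  ring
end

section
/- Let n ≥ 2, p ∈ (0,1), and {I_{i,j} : 1 ≤ i < j ≤ n} i.i.d. Bernoulli(p) (with I_{j,i} = I_{i,j}). For t ∈ [0,1] let T_n(t) = ((⌊nt⌋-2)/n^2) Σ_{1≤i<j≤⌊nt⌋} I_{i,j}. Let (I,J) be uniform over pairs 1 ≤ I < J ≤ n, independent of everything, and I'_{I,J} an independent Bernoulli(p). Define T'_n(t) = T_n(t) - ((⌊nt⌋-2)/n^2)(I_{I,J} - I'_{I,J}) 1_{[I/n,1]∩[J/n,1]}(t). Then for every t ∈ [0,1], E[T_n(t) - T'_n(t) | G] = (1/C(n,2)) (T_n(t) - E[T_n(t)]), where G is the σ-algebra generated by {I_{i,j}} and C(n,2) = n(n-1)/2. -/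
open MeasureTheory ProbabilityTheory
open scoped ENNReal NNReal

/-- The rescaled edge-count process
`T_n(t) = ((⌊nt⌋-2)/n²) Σ_{1≤i<j≤⌊nt⌋} I_{i,j}`. -/
noncomputable def Tproc {Ω : Type*} (n : ℕ) (E : Fin n → Fin n → Ω → ℝ)
    (ω : Ω) (t : ℝ) : ℝ :=
  (((⌊(n : ℝ) * t⌋ : ℝ) - 2) / (n : ℝ) ^ 2) *
    ∑ i : Fin n, ∑ j : Fin n,
      if (i : ℕ) < (j : ℕ) ∧ ((j : ℕ) + 1 : ℤ) ≤ ⌊(n : ℝ) * t⌋ then E i j ω else 0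

/-- The resampled version `T'_n` of `T_n`, where the edge at the random pair
`(I,J) = pr ω` is replaced by the independent Bernoulli variable `E' ω`. -/
noncomputable def Tproc' {Ω : Type*} (n : ℕ) (E : Fin n → Fin n → Ω → ℝ)
    (pr : Ω → {q : Fin n × Fin n // q.1 < q.2}) (E' : Ω → ℝ) (ω : Ω) (t : ℝ) : ℝ :=
  Tproc n E ω t
    - (((⌊(n : ℝ) * t⌋ : ℝ) - 2) / (n : ℝ) ^ 2) *
        (E (pr ω).1.1 (pr ω).1.2 ω - E' ω) *
        (if max ((((pr ω).1.1 : ℕ) + 1 : ℝ) / (n : ℝ))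
              ((((pr ω).1.2 : ℕ) + 1 : ℝ) / (n : ℝ)) ≤ t then 1 else 0)

/-- A bounded measurable function on a probability space is integrable. -/
lemma integrable_of_abs_le {Ω : Type*} [MeasurableSpace Ω] {μ : Measure Ω}
    [IsProbabilityMeasure μ] {f : Ω → ℝ} (hf : Measurable f) (C : ℝ)
    (h : ∀ ω, |f ω| ≤ C) : Integrable f μ :=
  (integrable_const C).mono' hf.aestronglyMeasurable (Filter.Eventually.of_forall h)

/-- Conditional linearity for the edge-count exchangeable pair:
`E[T_n(t) - T'_n(t) | G] = (1/C(n,2)) (T_n(t) - E T_n(t))`, `G = σ({I_{i,j}})`. -/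
theorem stmt9 {Ω : Type*} [MeasurableSpace Ω] (μ : Measure Ω) [IsProbabilityMeasure μ]
    (n : ℕ) (hn : 2 ≤ n) (p : ℝ) (hp : p ∈ Set.Ioo (0 : ℝ) 1)
    (E : Fin n → Fin n → Ω → ℝ) (hEm : ∀ i j, Measurable (E i j))
    (hsym : ∀ i j, E j i = E i j) (hdiag : ∀ i ω, E i i ω = 0)
    (h01 : ∀ i j ω, E i j ω = 0 ∨ E i j ω = 1)
    (hber : ∀ i j : Fin n, i < j → μ {ω | E i j ω = 1} = ENNReal.ofReal p)
    (hind : iIndepFun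
      (fun q : {q : Fin n × Fin n // q.1 < q.2} => E q.1.1 q.1.2) μ)
    (pr : Ω → {q : Fin n × Fin n // q.1 < q.2}) (hprm : Measurable pr)
    (hpru : ∀ q, μ (pr ⁻¹' {q}) = (((n * (n - 1) / 2 : ℕ)) : ℝ≥0∞)⁻¹)
    (E' : Ω → ℝ) (hE'm : Measurable E')
    (hE'01 : ∀ ω, E' ω = 0 ∨ E' ω = 1) (hE'p : μ {ω | E' ω = 1} = ENNReal.ofReal p)
    (hindPair : IndepFun (fun ω => (pr ω, E' ω))
      (fun ω (q : Fin n × Fin n) => E q.1 q.2 ω) μ)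
    (hindPrE' : IndepFun pr E' μ)
    (t : ℝ) (ht : t ∈ Set.Icc (0 : ℝ) 1) :
    μ[fun ω => Tproc n E ω t - Tproc' n E pr E' ω t
        | MeasurableSpace.comap (fun ω (q : Fin n × Fin n) => E q.1 q.2 ω) inferInstance]
      =ᵐ[μ] fun ω =>
        (1 / ((n : ℝ) * ((n : ℝ) - 1) / 2)) *
          (Tproc n E ω t - ∫ ω', Tproc n E ω' t ∂μ) := by
  classical
  rename_i mΩ hPMμ
  obtain ⟨hp0, hp1⟩ := hp
  have hn0 : (0 : ℝ) < n := by
    have : (0 : ℕ) < n := by omega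
    exact_mod_cast this
  set F : Ω → (Fin n × Fin n) → ℝ := fun ω q => E q.1 q.2 ω with hFdef
  have hFmeas : Measurable F := measurable_pi_lambda _ (fun q => hEm q.1 q.2)
  have hm_le : MeasurableSpace.comap F inferInstance ≤ mΩ := hFmeas.comap_le
  haveI hsf : SigmaFinite (μ.trim hm_le) := inferInstance
  have hFm : Measurable[MeasurableSpace.comap F inferInstance] F := comap_measurable F
  -- notation
  set c : ℝ := ((⌊(n : ℝ) * t⌋ : ℝ) - 2) / (n : ℝ) ^ 2 with hc
  set χ : {q : Fin n × Fin n // q.1 < q.2} → ℝ := fun q => if ((q.1.2 : ℕ) + 1 : ℤ) ≤ ⌊(n : ℝ) * t⌋ then 1 else 0 with hχ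
  set N : ℕ := n * (n - 1) / 2 with hN
  set r : ℝ := ((N : ℝ))⁻¹ with hr
  -- basic numerology
  have hdvd : 2 ∣ n * (n - 1) := by
    have := Nat.even_mul_succ_self (n - 1)
    have h1 : n - 1 + 1 = n := by omega
    rw [h1] at this
    rw [mul_comm]
    exact this.two_dvd
  have hNpos : 0 < N := by
    have h2 : 2 ≤ n * (n - 1) := by
      calc 2 = 2 * 1 := by ring
      _ ≤ n * (n - 1) := Nat.mul_le_mul hn (by omega)
    rw [hN]
    omega
  have hNcast : ((N : ℕ) : ℝ) = (n : ℝ) * ((n : ℝ) - 1) / 2 := by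
    rw [hN, Nat.cast_div hdvd (by norm_num)]
    push_cast [Nat.cast_sub (by omega : 1 ≤ n)]
    ring
  -- the indicator simplification
  have hind_eq : ∀ q : {q : Fin n × Fin n // q.1 < q.2},
      (if max ((((q.1.1 : ℕ) + 1 : ℝ)) / (n : ℝ)) ((((q.1.2 : ℕ) + 1 : ℝ)) / (n : ℝ)) ≤ t
        then (1 : ℝ) else 0) = χ q := by
    intro q
    have hij : (q.1.1 : ℕ) < (q.1.2 : ℕ) := q.2
    have hiff : max ((((q.1.1 : ℕ) + 1 : ℝ)) / (n : ℝ)) ((((q.1.2 : ℕ) + 1 : ℝ)) / (n : ℝ)) ≤ t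
        ↔ ((q.1.2 : ℕ) + 1 : ℤ) ≤ ⌊(n : ℝ) * t⌋ := by
      rw [max_le_iff, Int.le_floor]
      constructor
      · rintro ⟨-, h2⟩
        rw [div_le_iff₀ hn0] at h2
        push_cast
        linarith [h2]
      · intro h
        push_cast at h
        have h2 : (((q.1.2 : ℕ) + 1 : ℝ)) / (n : ℝ) ≤ t := by
          rw [div_le_iff₀ hn0]; linarith
        refine ⟨le_trans ?_ h2, h2⟩
        have hle : ((q.1.1 : ℕ) : ℝ) ≤ ((q.1.2 : ℕ) : ℝ) := by exact_mod_cast hij.le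
        gcongr
    rw [hχ]
    simp only
    exact if_congr hiff rfl rfl
  -- pointwise formula for the difference
  have hD : ∀ ω, Tproc n E ω t - Tproc' n E pr E' ω t
      = ∑ q : {q : Fin n × Fin n // q.1 < q.2}, (if pr ω = q then c * χ q * (E q.1.1 q.1.2 ω - E' ω) else 0) := by
    intro ω
    rw [Finset.sum_ite_eq]
    simp only [Finset.mem_univ, if_true]
    show Tproc n E ω t - Tproc' n E pr E' ω t = _
    simp only [Tproc']
    rw [sub_sub_cancel, ← hind_eq (pr ω), hc]
    ring
  -- boundedness and integrability of the basic variables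
  have hEabs : ∀ i j ω, |E i j ω| ≤ 1 := by
    intro i j ω; rcases h01 i j ω with h | h <;> rw [h] <;> norm_num
  have hE'abs : ∀ ω, |E' ω| ≤ 1 := by
    intro ω; rcases hE'01 ω with h | h <;> rw [h] <;> norm_num
  have hEint : ∀ i j, Integrable (E i j) μ := fun i j =>
    integrable_of_abs_le (hEm i j) 1 (hEabs i j)
  -- expectation of a single edge variable
  have hEip : ∀ i j : Fin n, (i : ℕ) < (j : ℕ) → ∫ ω, E i j ω ∂μ = p := by
    intro i j hij
    have hset : MeasurableSet[mΩ] ((E i j) ⁻¹' {1}) := hEm i j (measurableSet_singleton 1)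
    have heq : E i j = ((E i j) ⁻¹' {1}).indicator (1 : Ω → ℝ) := by
      funext ω
      rcases h01 i j ω with h | h <;>
        simp [Set.indicator_apply, Set.mem_preimage, h]
    rw [heq, integral_indicator_one hset, measureReal_def,
      show (E i j) ⁻¹' {1} = {ω | E i j ω = 1} from rfl, hber i j hij,
      ENNReal.toReal_ofReal hp0.le]
  -- the pair (pr, E') and its σ-algebra
  have hpairmeas : Measurable[mΩ] (fun ω => (pr ω, E' ω)) := hprm.prodMk hE'm
  have hmP_le : MeasurableSpace.comap (fun ω => (pr ω, E' ω)) inferInstance ≤ mΩ :=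
    hpairmeas.comap_le
  have hIndep : Indep (MeasurableSpace.comap (fun ω => (pr ω, E' ω)) inferInstance)
      (MeasurableSpace.comap F inferInstance) μ :=
    (IndepFun_iff_Indep (fun ω => (pr ω, E' ω)) F μ).1 hindPair
  -- the key per-edge conditional expectation computation
  have key : ∀ q : {q : Fin n × Fin n // q.1 < q.2},
      μ[(fun ω => if pr ω = q then c * χ q * (E q.1.1 q.1.2 ω - E' ω) else 0) | MeasurableSpace.comap F inferInstance]
        =ᵐ[μ] fun ω => (c * χ q) * (E q.1.1 q.1.2 ω * r - r * p) := by
    intro q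
    have hgm : Measurable[MeasurableSpace.comap F inferInstance] (fun ω => E q.1.1 q.1.2 ω) := (measurable_pi_apply q.1).comp hFm
    have hset_q : MeasurableSet[mΩ] (pr ⁻¹' {q}) := hprm (measurableSet_singleton q)
    have h1m : Measurable[mΩ] (fun ω => if pr ω = q then (1 : ℝ) else 0) :=
      Measurable.ite hset_q measurable_const measurable_const
    -- strong measurability wrt σ(pair)
    have hφ1 : Measurable (fun x : {q : Fin n × Fin n // q.1 < q.2} × ℝ => if x.1 = q then (1 : ℝ) else 0) :=
      Measurable.ite (measurable_fst (measurableSet_singleton q)) measurable_const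
        measurable_const
    have h1SM : StronglyMeasurable[MeasurableSpace.comap (fun ω => (pr ω, E' ω)) inferInstance]
        (fun ω => if pr ω = q then (1 : ℝ) else 0) :=
      ((hφ1.comp (comap_measurable (fun ω : Ω => (pr ω, E' ω))))).stronglyMeasurable
    have hφ2 : Measurable (fun x : {q : Fin n × Fin n // q.1 < q.2} × ℝ => (if x.1 = q then (1 : ℝ) else 0) * x.2) :=
      hφ1.mul measurable_snd
    have h2SM : StronglyMeasurable[MeasurableSpace.comap (fun ω => (pr ω, E' ω)) inferInstance]
        (fun ω => (if pr ω = q then (1 : ℝ) else 0) * E' ω) :=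
      ((hφ2.comp (comap_measurable (fun ω : Ω => (pr ω, E' ω))))).stronglyMeasurable
    -- integrability
    have hi1 : Integrable (fun ω => if pr ω = q then (1 : ℝ) else 0) μ :=
      integrable_of_abs_le h1m 1 (by intro ω; split <;> norm_num)
    have higm1 : Integrable
        ((fun ω => E q.1.1 q.1.2 ω) * (fun ω => if pr ω = q then (1 : ℝ) else 0)) μ := by
      refine integrable_of_abs_le ((hEm _ _).mul h1m) 1 ?_
      intro ω
      simp only [Pi.mul_apply, abs_mul]
      calc |E q.1.1 q.1.2 ω| * |if pr ω = q then (1 : ℝ) else 0| ≤ 1 * 1 := by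
            apply mul_le_mul (hEabs _ _ _) ?_ (abs_nonneg _) zero_le_one
            split <;> norm_num
        _ = 1 := by norm_num
    have hi2 : Integrable (fun ω => (if pr ω = q then (1 : ℝ) else 0) * E' ω) μ := by
      refine integrable_of_abs_le (h1m.mul hE'm) 1 ?_
      intro ω
      rw [abs_mul]
      calc |if pr ω = q then (1 : ℝ) else 0| * |E' ω| ≤ 1 * 1 := by
            apply mul_le_mul ?_ (hE'abs _) (abs_nonneg _) zero_le_one
            split <;> norm_num
        _ = 1 := by norm_num
    -- integrals of the σ(pair)-measurable factors
    have hint1 : ∫ ω, (if pr ω = q then (1 : ℝ) else 0) ∂μ = r := by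
      have hH1eq : (fun ω => if pr ω = q then (1 : ℝ) else 0)
          = (pr ⁻¹' {q}).indicator (1 : Ω → ℝ) := by
        funext ω; by_cases h : pr ω = q <;> simp [Set.indicator_apply, h]
      rw [show (∫ ω, (if pr ω = q then (1 : ℝ) else 0) ∂μ)
          = ∫ ω, (pr ⁻¹' {q}).indicator (1 : Ω → ℝ) ω ∂μ from by rw [← hH1eq],
        integral_indicator_one hset_q, measureReal_def, hpru q, hr, ENNReal.toReal_inv]
      simp [hN]
    have hμE1 : μ (E' ⁻¹' {1}) = ENNReal.ofReal p := by
      rw [show E' ⁻¹' {1} = {ω | E' ω = 1} from rfl]; exact hE'p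
    have hint2 : ∫ ω, (if pr ω = q then (1 : ℝ) else 0) * E' ω ∂μ = r * p := by
      have hH2eq : (fun ω => (if pr ω = q then (1 : ℝ) else 0) * E' ω)
          = (pr ⁻¹' {q} ∩ E' ⁻¹' {1}).indicator (1 : Ω → ℝ) := by
        funext ω
        rcases hE'01 ω with h | h <;> by_cases h' : pr ω = q <;>
          simp [Set.indicator_apply, Set.mem_preimage, h, h']
      rw [show (∫ ω, (if pr ω = q then (1 : ℝ) else 0) * E' ω ∂μ)
          = ∫ ω, (pr ⁻¹' {q} ∩ E' ⁻¹' {1}).indicator (1 : Ω → ℝ) ω ∂μ from by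
            rw [← hH2eq],
        integral_indicator_one (hset_q.inter (hE'm (measurableSet_singleton 1))), measureReal_def,
        hindPrE'.measure_inter_preimage_eq_mul _ _ (measurableSet_singleton q)
          (measurableSet_singleton 1),
        hpru q, hμE1, ENNReal.toReal_mul, ENNReal.toReal_ofReal hp0.le, hr,
        ENNReal.toReal_inv]
      simp [hN]
    -- conditional expectations of the independent factors are constant
    have h1const : μ[(fun ω => if pr ω = q then (1 : ℝ) else 0) | MeasurableSpace.comap F inferInstance]
        =ᵐ[μ] fun _ => r := by
      have h := condExp_indep_eq hmP_le hm_le h1SM hIndep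
      rwa [hint1] at h
    have h2const : μ[(fun ω => (if pr ω = q then (1 : ℝ) else 0) * E' ω) | MeasurableSpace.comap F inferInstance]
        =ᵐ[μ] fun _ => r * p := by
      have h := condExp_indep_eq hmP_le hm_le h2SM hIndep
      rwa [hint2] at h
    -- pull-out property
    have hmul : μ[(fun ω => E q.1.1 q.1.2 ω) * (fun ω => if pr ω = q then (1 : ℝ) else 0) | MeasurableSpace.comap F inferInstance]
        =ᵐ[μ] (fun ω => E q.1.1 q.1.2 ω)
          * μ[(fun ω => if pr ω = q then (1 : ℝ) else 0) | MeasurableSpace.comap F inferInstance] :=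
      condExp_mul_of_stronglyMeasurable_left hgm.stronglyMeasurable higm1 hi1
    -- put the pieces together
    have hfun : (fun ω => if pr ω = q then c * χ q * (E q.1.1 q.1.2 ω - E' ω) else 0)
        = (c * χ q) • (((fun ω => E q.1.1 q.1.2 ω) * (fun ω => if pr ω = q then (1 : ℝ) else 0))
            - (fun ω => (if pr ω = q then (1 : ℝ) else 0) * E' ω)) := by
      funext ω
      by_cases h : pr ω = q <;>
        simp only [h, if_true, if_false, Pi.smul_apply, Pi.sub_apply, Pi.mul_apply,
          smul_eq_mul] <;> ring
    rw [hfun]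
    refine (condExp_smul (c * χ q) _ _).trans ?_
    have hsub := condExp_sub higm1 hi2 (m := MeasurableSpace.comap F inferInstance)
    filter_upwards [hsub, hmul, h1const, h2const] with ω hω1 hω2 hω3 hω4
    simp only [Pi.smul_apply, smul_eq_mul, hω1, Pi.sub_apply, hω2, Pi.mul_apply, hω3, hω4]
  -- sum over all pairs
  have hsum : μ[(fun ω => Tproc n E ω t - Tproc' n E pr E' ω t) | MeasurableSpace.comap F inferInstance]
      =ᵐ[μ] fun ω => ∑ q : {q : Fin n × Fin n // q.1 < q.2}, (c * χ q) * (E q.1.1 q.1.2 ω * r - r * p) := by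
    have hfuneq : (fun ω => Tproc n E ω t - Tproc' n E pr E' ω t)
        = ∑ q : {q : Fin n × Fin n // q.1 < q.2}, (fun ω => if pr ω = q then c * χ q * (E q.1.1 q.1.2 ω - E' ω) else 0) := by
      funext ω
      rw [Finset.sum_apply, hD ω]
    rw [hfuneq]
    have hintq : ∀ q : {q : Fin n × Fin n // q.1 < q.2}, Integrable
        (fun ω => if pr ω = q then c * χ q * (E q.1.1 q.1.2 ω - E' ω) else 0) μ := by
      intro q
      have hmq : Measurable[mΩ]
          (fun ω => if pr ω = q then c * χ q * (E q.1.1 q.1.2 ω - E' ω) else 0) := by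
        refine Measurable.ite (hprm (measurableSet_singleton q)) ?_ measurable_const
        exact measurable_const.mul ((hEm _ _).sub hE'm)
      refine integrable_of_abs_le hmq (|c * χ q| * 2) ?_
      intro ω
      split
      · rw [abs_mul]
        have h2 : |E q.1.1 q.1.2 ω - E' ω| ≤ 2 := by
          calc |E q.1.1 q.1.2 ω - E' ω| ≤ |E q.1.1 q.1.2 ω| + |E' ω| := abs_sub _ _
            _ ≤ 1 + 1 := add_le_add (hEabs _ _ _) (hE'abs _)
            _ = 2 := by norm_num
        exact mul_le_mul_of_nonneg_left h2 (abs_nonneg _)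
      · simp only [abs_zero]; positivity
    refine (condExp_finsetSum (fun q _ => hintq q) _).trans ?_
    have hall : ∀ᵐ ω ∂μ, ∀ q : {q : Fin n × Fin n // q.1 < q.2},
        (μ[(fun ω => if pr ω = q then c * χ q * (E q.1.1 q.1.2 ω - E' ω) else 0) | MeasurableSpace.comap F inferInstance]) ω
          = (c * χ q) * (E q.1.1 q.1.2 ω * r - r * p) := ae_all_iff.2 key
    filter_upwards [hall] with ω hω
    rw [Finset.sum_apply]
    exact Finset.sum_congr rfl fun q _ => hω q
  -- the expectation of `T_n(t)`
  have hTint : ∫ ω', Tproc n E ω' t ∂μ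
      = c * ∑ i : Fin n, ∑ j : Fin n,
          (if (i : ℕ) < (j : ℕ) ∧ ((j : ℕ) + 1 : ℤ) ≤ ⌊(n : ℝ) * t⌋ then p else 0) := by
    have hsummandint : ∀ i j : Fin n, Integrable
        (fun ω => if (i : ℕ) < (j : ℕ) ∧ ((j : ℕ) + 1 : ℤ) ≤ ⌊(n : ℝ) * t⌋
          then E i j ω else 0) μ := by
      intro i j
      by_cases h : (i : ℕ) < (j : ℕ) ∧ ((j : ℕ) + 1 : ℤ) ≤ ⌊(n : ℝ) * t⌋
      · simpa [h] using hEint i j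
      · exact (integrable_zero Ω ℝ μ).congr (Filter.Eventually.of_forall fun ω => (if_neg h).symm)
    simp only [Tproc]
    rw [show (fun ω' => ((⌊(n : ℝ) * t⌋ : ℝ) - 2) / (n : ℝ) ^ 2 *
        ∑ i : Fin n, ∑ j : Fin n,
          (if (i : ℕ) < (j : ℕ) ∧ ((j : ℕ) + 1 : ℤ) ≤ ⌊(n : ℝ) * t⌋ then E i j ω' else 0))
      = fun ω' => c * ∑ i : Fin n, ∑ j : Fin n,
          (if (i : ℕ) < (j : ℕ) ∧ ((j : ℕ) + 1 : ℤ) ≤ ⌊(n : ℝ) * t⌋ then E i j ω' else 0)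
      from by rw [hc]]
    rw [integral_const_mul]
    congr 1
    rw [integral_finset_sum _ (fun i _ => integrable_finset_sum _ (fun j _ => hsummandint i j))]
    refine Finset.sum_congr rfl fun i _ => ?_
    rw [integral_finset_sum _ (fun j _ => hsummandint i j)]
    refine Finset.sum_congr rfl fun j _ => ?_
    split_ifs with h
    · exact hEip i j h.1
    · simp
  -- final algebraic identity
  refine hsum.trans (Filter.Eventually.of_forall fun ω => ?_)
  rw [hTint]
  have hr' : (1 / ((n : ℝ) * ((n : ℝ) - 1) / 2)) = r := by
    rw [hr, hNcast, one_div]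
  rw [hr']
  simp only [Tproc, hχ]
  rw [show ((⌊(n : ℝ) * t⌋ : ℝ) - 2) / (n : ℝ) ^ 2 = c from by rw [hc]]
  -- both sides as a double sum
  have hLHS : (∑ q : {q : Fin n × Fin n // q.1 < q.2}, (c * (if ((q.1.2 : ℕ) + 1 : ℤ) ≤ ⌊(n : ℝ) * t⌋ then (1 : ℝ) else 0))
          * (E q.1.1 q.1.2 ω * r - r * p))
      = ∑ x : Fin n × Fin n, (if x.1 < x.2
          then (c * (if ((x.2 : ℕ) + 1 : ℤ) ≤ ⌊(n : ℝ) * t⌋ then (1 : ℝ) else 0))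
            * (E x.1 x.2 ω * r - r * p) else 0) := by
    rw [← Finset.sum_filter]
    rw [Finset.sum_subtype (p := fun x : Fin n × Fin n => x.1 < x.2)
      (Finset.univ.filter (fun x : Fin n × Fin n => x.1 < x.2))
      (fun x => by simp) (fun x : Fin n × Fin n =>
        (c * (if ((x.2 : ℕ) + 1 : ℤ) ≤ ⌊(n : ℝ) * t⌋ then (1 : ℝ) else 0))
          * (E x.1 x.2 ω * r - r * p))]
  rw [hLHS, Fintype.sum_prod_type]
  simp only [mul_sub, Finset.mul_sum, ← Finset.sum_sub_distrib]
  refine Finset.sum_congr rfl fun i _ => ?_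
  refine Finset.sum_congr rfl fun j _ => ?_
  by_cases h1 : i < j <;> by_cases h2 : ((j : ℕ) + 1 : ℤ) ≤ ⌊(n : ℝ) * t⌋ <;>
    have h1' := h1 <;>
    simp only [Fin.lt_def] at h1' <;>
    simp [h1, h1', h2] <;> ring
end

section
/- Let n ≥ 3, p ∈ (0,1), {I_{i,j}} i.i.d. Bernoulli(p) symmetric edge indicators, and for t ∈ [0,1] define V_n(t) = (1/(2n^2)) Σ_{1≤i,j,k≤⌊nt⌋ distinct} I_{i,j}I_{j,k} and T_n(t) = ((⌊nt⌋-2)/n^2) Σ_{1≤i<j≤⌊nt⌋} I_{i,j}. Let (I,J) be uniform over unordered pairs, I'_{I,J} an independent Bernoulli(p), and V'_n(t) = V_n(t) - (1/n^2) Σ_{k≠I,J} (I_{I,J} - I'_{I,J})(I_{J,k} + I_{I,k}) 1_{[I/n,1]∩[J/n,1]∩[k/n,1]}(t). Then for every t ∈ [0,1], E[V_n(t) - V'_n(t) | G] = (2/C(n,2)) (V_n(t) - E[V_n(t)]) - (2p/C(n,2)) (T_n(t) - E[T_n(t)]), where G = σ({I_{i,j}}). -/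
open MeasureTheory ProbabilityTheory
open scoped ENNReal NNReal

/-- bounded measurable functions are integrable on a finite measure -/
lemma aux_int {Ω : Type*} [MeasurableSpace Ω] (μ : Measure Ω) [IsFiniteMeasure μ]
    (f : Ω → ℝ) (c : ℝ) (hf : Measurable f) (hb : ∀ ω, |f ω| ≤ c) :
    Integrable f μ :=
  (integrable_const c).mono' hf.aestronglyMeasurable (Filter.Eventually.of_forall (fun ω => by
    simpa [Real.norm_eq_abs] using hb ω))

lemma aux_integral_01 {Ω : Type*} [MeasurableSpace Ω] (μ : Measure Ω) [IsProbabilityMeasure μ]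
    (f : Ω → ℝ) (hf : Measurable f) (h01 : ∀ ω, f ω = 0 ∨ f ω = 1)
    (p : ℝ) (hp : 0 ≤ p) (hfp : μ {ω | f ω = 1} = ENNReal.ofReal p) :
    ∫ ω, f ω ∂μ = p := by
  have hfi : f = Set.indicator {ω | f ω = 1} (fun _ => (1:ℝ)) := by
    funext ω
    rcases h01 ω with h | h <;> simp [Set.indicator, h]
  have hms : MeasurableSet {ω | f ω = 1} := hf (measurableSet_singleton 1)
  rw [hfi]
  rw [show ∫ ω, Set.indicator {ω | f ω = 1} (fun _ => (1:ℝ)) ω ∂μ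
      = ∫ ω, Set.indicator {ω | f ω = 1} (1 : Ω → ℝ) ω ∂μ from rfl]
  rw [integral_indicator_one hms, measureReal_def, hfp, ENNReal.toReal_ofReal hp]

lemma aux_sum_bound {n : ℕ} (f : Fin n → ℝ) (c : ℝ) (h : ∀ i, |f i| ≤ c) :
    |∑ i : Fin n, f i| ≤ n * c := by
  calc |∑ i : Fin n, f i| ≤ ∑ i : Fin n, |f i| := Finset.abs_sum_le_sum_abs _ _
    _ ≤ ∑ _i : Fin n, c := Finset.sum_le_sum (fun i _ => h i)
    _ = n * c := by rw [Finset.sum_const, Finset.card_univ, Fintype.card_fin, nsmul_eq_mul]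

lemma aux_ite_sum {n : ℕ} (c : Prop) [Decidable c] (f : Fin n → ℝ) :
    (if c then ∑ k : Fin n, f k else 0) = ∑ k : Fin n, (if c then f k else 0) := by
  split <;> simp

lemma aux_split (c1 c2 c3 : Prop) [Decidable c1] [Decidable c2] [Decidable c3] (x y z : ℝ) :
    (if c1 then (if c2 then x * (y + z) * (if c3 then 1 else 0) else 0) else 0)
      = (if c1 ∧ c2 ∧ c3 then x * y else 0) + (if c1 ∧ c2 ∧ c3 then x * z else 0) := by
  split_ifs <;> first | ring1 | (exfalso; tauto)

lemma aux_split2 (c1 c2 c3 : Prop) [Decidable c1] [Decidable c2] [Decidable c3] (y z : ℝ) :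
    (if c1 then (if c2 then (y + z) * (if c3 then 1 else 0) else 0) else 0)
      = (if c1 ∧ c2 ∧ c3 then y else 0) + (if c1 ∧ c2 ∧ c3 then z else 0) := by
  split_ifs <;> first | ring1 | (exfalso; tauto)

lemma aux_tri2 {α : Type*} [LinearOrder α] {i j : α} (c1 c2 c3 : Prop)
    [Decidable c1] [Decidable c2] [Decidable c3] (A : Prop)
    (h1 : c1 ↔ i < j ∧ A) (h2 : c2 ↔ j < i ∧ A) (h3 : c3 ↔ i ≠ j ∧ A) (x : ℝ) :
    (if c1 then x else 0) + (if c2 then x else 0) = if c3 then x else 0 := by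
  by_cases hA : A
  · rcases lt_trichotomy i j with h | h | h
    · rw [if_pos (h1.mpr ⟨h, hA⟩), if_neg (fun hc => absurd (h2.mp hc).1 (asymm h)),
        if_pos (h3.mpr ⟨ne_of_lt h, hA⟩), add_zero]
    · subst h
      rw [if_neg (fun hc => lt_irrefl i (h1.mp hc).1),
        if_neg (fun hc => lt_irrefl i (h2.mp hc).1),
        if_neg (fun hc => (h3.mp hc).1 rfl), add_zero]
    · rw [if_neg (fun hc => absurd (h1.mp hc).1 (asymm h)), if_pos (h2.mpr ⟨h, hA⟩),
        if_pos (h3.mpr ⟨ne_of_gt h, hA⟩), zero_add]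
  · rw [if_neg (fun hc => hA (h1.mp hc).2), if_neg (fun hc => hA (h2.mp hc).2),
      if_neg (fun hc => hA (h3.mp hc).2), add_zero]

lemma aux_count {n : ℕ} (M : ℤ) (h0 : 0 ≤ M) (hn : M ≤ (n:ℤ)) :
    ∑ i : Fin n, (if ((i:ℕ) + 1 : ℤ) ≤ M then (1:ℝ) else 0) = (M:ℝ) := by
  have h1 : ∀ i : Fin n, (if ((i:ℕ) + 1 : ℤ) ≤ M then (1:ℝ) else 0)
      = (if (i:ℕ) < M.toNat then (1:ℝ) else 0) := by
    intro i; apply if_congr _ rfl rfl; omega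
  rw [Finset.sum_congr rfl (fun i _ => h1 i)]
  rw [Fin.sum_univ_eq_sum_range (fun i => if i < M.toNat then (1:ℝ) else 0) n]
  rw [Finset.sum_boole]
  have h2 : (Finset.range n).filter (fun i => i < M.toNat) = Finset.range M.toNat := by
    ext i; simp only [Finset.mem_filter, Finset.mem_range]; omega
  rw [h2, Finset.card_range]
  rw [show ((M.toNat : ℕ) : ℝ) = ((M.toNat : ℤ) : ℝ) by push_cast; ring]
  congr 1
  omega

lemma aux_sumQ {n : ℕ} (g : Fin n → Fin n → ℝ) :
    ∑ q : {q : Fin n × Fin n // q.1 < q.2}, g q.1.1 q.1.2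
      = ∑ i : Fin n, ∑ j : Fin n, if i < j then g i j else 0 := by
  have h1 : ∑ i : Fin n, ∑ j : Fin n, (if i < j then g i j else 0)
      = ∑ q : Fin n × Fin n, (if q.1 < q.2 then g q.1 q.2 else 0) := by
    rw [Fintype.sum_prod_type]
  rw [h1, ← Finset.sum_filter]
  exact (Finset.sum_subtype (Finset.univ.filter (fun q : Fin n × Fin n => q.1 < q.2))
    (fun q => by simp) (fun q => g q.1 q.2)).symm

lemma aux_comb1 {n : ℕ} (e : Fin n → Fin n → ℝ) (hsym : ∀ i j, e j i = e i j)
    (P : Fin n → Prop) [DecidablePred P] :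
    (∑ i : Fin n, ∑ j : Fin n, if i < j then
        (∑ k : Fin n, if k ≠ i ∧ k ≠ j then
          e i j * (e j k + e i k) * (if P i ∧ P j ∧ P k then 1 else 0) else 0) else 0)
      = ∑ i : Fin n, ∑ j : Fin n, ∑ k : Fin n,
          if i ≠ j ∧ j ≠ k ∧ i ≠ k ∧ P i ∧ P j ∧ P k then e i j * e j k else 0 := by
  calc (∑ i : Fin n, ∑ j : Fin n, if i < j then
        (∑ k : Fin n, if k ≠ i ∧ k ≠ j then
          e i j * (e j k + e i k) * (if P i ∧ P j ∧ P k then 1 else 0) else 0) else 0)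
      = (∑ i : Fin n, ∑ j : Fin n, ∑ k : Fin n,
          (if i < j ∧ (k ≠ i ∧ k ≠ j) ∧ (P i ∧ P j ∧ P k) then e i j * e j k else 0))
        + (∑ i : Fin n, ∑ j : Fin n, ∑ k : Fin n,
          (if i < j ∧ (k ≠ i ∧ k ≠ j) ∧ (P i ∧ P j ∧ P k) then e i j * e i k else 0)) := by
        rw [← Finset.sum_add_distrib]
        refine Finset.sum_congr rfl (fun i _ => ?_)
        rw [← Finset.sum_add_distrib]
        refine Finset.sum_congr rfl (fun j _ => ?_)
        rw [aux_ite_sum, ← Finset.sum_add_distrib]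
        exact Finset.sum_congr rfl (fun k _ => aux_split _ _ _ _ _ _)
    _ = (∑ i : Fin n, ∑ j : Fin n, ∑ k : Fin n,
          (if i < j ∧ (k ≠ i ∧ k ≠ j) ∧ (P i ∧ P j ∧ P k) then e i j * e j k else 0))
        + (∑ i : Fin n, ∑ j : Fin n, ∑ k : Fin n,
          (if j < i ∧ (k ≠ i ∧ k ≠ j) ∧ (P i ∧ P j ∧ P k) then e i j * e j k else 0)) := by
        congr 1
        rw [Finset.sum_comm]
        refine Finset.sum_congr rfl (fun i _ => Finset.sum_congr rfl (fun j _ =>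
          Finset.sum_congr rfl (fun k _ => ?_)))
        exact if_congr (by tauto) (by rw [hsym j i]) rfl
    _ = ∑ i : Fin n, ∑ j : Fin n, ∑ k : Fin n,
          (if i ≠ j ∧ j ≠ k ∧ i ≠ k ∧ P i ∧ P j ∧ P k then e i j * e j k else 0) := by
        rw [← Finset.sum_add_distrib]
        refine Finset.sum_congr rfl (fun i _ => ?_)
        rw [← Finset.sum_add_distrib]
        refine Finset.sum_congr rfl (fun j _ => ?_)
        rw [← Finset.sum_add_distrib]
        refine Finset.sum_congr rfl (fun k _ => ?_)
        exact aux_tri2 _ _ _ ((k ≠ i ∧ k ≠ j) ∧ (P i ∧ P j ∧ P k))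
          Iff.rfl Iff.rfl (by tauto) _

lemma aux_comb2 {n : ℕ} (e : Fin n → Fin n → ℝ) (hsym : ∀ i j, e j i = e i j)
    (M : ℤ) (h0 : 0 ≤ M) (hMn : M ≤ (n:ℤ)) :
    (∑ i : Fin n, ∑ j : Fin n, if i < j then
        (∑ k : Fin n, if k ≠ i ∧ k ≠ j then
          (e j k + e i k) *
            (if (((i:ℕ) + 1 : ℤ) ≤ M ∧ ((j:ℕ) + 1 : ℤ) ≤ M ∧ ((k:ℕ) + 1 : ℤ) ≤ M)
              then 1 else 0) else 0) else 0)
      = ((M:ℝ) - 2) * (2 * ∑ i : Fin n, ∑ j : Fin n,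
          if (i:ℕ) < (j:ℕ) ∧ ((j:ℕ) + 1 : ℤ) ≤ M then e i j else 0) := by
  have step1 : (∑ i : Fin n, ∑ j : Fin n, if i < j then
        (∑ k : Fin n, if k ≠ i ∧ k ≠ j then
          (e j k + e i k) *
            (if (((i:ℕ) + 1 : ℤ) ≤ M ∧ ((j:ℕ) + 1 : ℤ) ≤ M ∧ ((k:ℕ) + 1 : ℤ) ≤ M)
              then 1 else 0) else 0) else 0)
      = ∑ i : Fin n, ∑ j : Fin n, ∑ k : Fin n,
          (if i ≠ j ∧ (k ≠ i ∧ k ≠ j) ∧ (((i:ℕ) + 1 : ℤ) ≤ M ∧ ((j:ℕ) + 1 : ℤ) ≤ M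
              ∧ ((k:ℕ) + 1 : ℤ) ≤ M) then e j k else 0) := by
    calc (∑ i : Fin n, ∑ j : Fin n, if i < j then
        (∑ k : Fin n, if k ≠ i ∧ k ≠ j then
          (e j k + e i k) *
            (if (((i:ℕ) + 1 : ℤ) ≤ M ∧ ((j:ℕ) + 1 : ℤ) ≤ M ∧ ((k:ℕ) + 1 : ℤ) ≤ M)
              then 1 else 0) else 0) else 0)
        = (∑ i : Fin n, ∑ j : Fin n, ∑ k : Fin n,
            (if i < j ∧ (k ≠ i ∧ k ≠ j) ∧ (((i:ℕ) + 1 : ℤ) ≤ M ∧ ((j:ℕ) + 1 : ℤ) ≤ M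
                ∧ ((k:ℕ) + 1 : ℤ) ≤ M) then e j k else 0))
          + (∑ i : Fin n, ∑ j : Fin n, ∑ k : Fin n,
            (if i < j ∧ (k ≠ i ∧ k ≠ j) ∧ (((i:ℕ) + 1 : ℤ) ≤ M ∧ ((j:ℕ) + 1 : ℤ) ≤ M
                ∧ ((k:ℕ) + 1 : ℤ) ≤ M) then e i k else 0)) := by
          rw [← Finset.sum_add_distrib]
          refine Finset.sum_congr rfl (fun i _ => ?_)
          rw [← Finset.sum_add_distrib]
          refine Finset.sum_congr rfl (fun j _ => ?_)
          rw [aux_ite_sum, ← Finset.sum_add_distrib]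
          exact Finset.sum_congr rfl (fun k _ => aux_split2 _ _ _ _ _)
      _ = (∑ i : Fin n, ∑ j : Fin n, ∑ k : Fin n,
            (if i < j ∧ (k ≠ i ∧ k ≠ j) ∧ (((i:ℕ) + 1 : ℤ) ≤ M ∧ ((j:ℕ) + 1 : ℤ) ≤ M
                ∧ ((k:ℕ) + 1 : ℤ) ≤ M) then e j k else 0))
          + (∑ i : Fin n, ∑ j : Fin n, ∑ k : Fin n,
            (if j < i ∧ (k ≠ i ∧ k ≠ j) ∧ (((i:ℕ) + 1 : ℤ) ≤ M ∧ ((j:ℕ) + 1 : ℤ) ≤ M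
                ∧ ((k:ℕ) + 1 : ℤ) ≤ M) then e j k else 0)) := by
          congr 1
          rw [Finset.sum_comm]
          refine Finset.sum_congr rfl (fun i _ => Finset.sum_congr rfl (fun j _ =>
            Finset.sum_congr rfl (fun k _ => ?_)))
          exact if_congr (by tauto) rfl rfl
      _ = ∑ i : Fin n, ∑ j : Fin n, ∑ k : Fin n,
            (if i ≠ j ∧ (k ≠ i ∧ k ≠ j) ∧ (((i:ℕ) + 1 : ℤ) ≤ M ∧ ((j:ℕ) + 1 : ℤ) ≤ M
                ∧ ((k:ℕ) + 1 : ℤ) ≤ M) then e j k else 0) := by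
          rw [← Finset.sum_add_distrib]
          refine Finset.sum_congr rfl (fun i _ => ?_)
          rw [← Finset.sum_add_distrib]
          refine Finset.sum_congr rfl (fun j _ => ?_)
          rw [← Finset.sum_add_distrib]
          refine Finset.sum_congr rfl (fun k _ => ?_)
          exact aux_tri2 _ _ _ _ Iff.rfl Iff.rfl Iff.rfl _
  rw [step1]
  have step2 : (∑ i : Fin n, ∑ j : Fin n, ∑ k : Fin n,
        (if i ≠ j ∧ (k ≠ i ∧ k ≠ j) ∧ (((i:ℕ) + 1 : ℤ) ≤ M ∧ ((j:ℕ) + 1 : ℤ) ≤ M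
            ∧ ((k:ℕ) + 1 : ℤ) ≤ M) then e j k else 0))
      = ∑ j : Fin n, ∑ k : Fin n, ∑ i : Fin n,
        (if i ≠ j ∧ (k ≠ i ∧ k ≠ j) ∧ (((i:ℕ) + 1 : ℤ) ≤ M ∧ ((j:ℕ) + 1 : ℤ) ≤ M
            ∧ ((k:ℕ) + 1 : ℤ) ≤ M) then e j k else 0) := by
    rw [Finset.sum_comm]
    exact Finset.sum_congr rfl (fun j _ => Finset.sum_comm)
  rw [step2]
  have step3 : ∀ j k : Fin n, (∑ i : Fin n,
        (if i ≠ j ∧ (k ≠ i ∧ k ≠ j) ∧ (((i:ℕ) + 1 : ℤ) ≤ M ∧ ((j:ℕ) + 1 : ℤ) ≤ M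
            ∧ ((k:ℕ) + 1 : ℤ) ≤ M) then e j k else 0))
      = (if k ≠ j ∧ (((j:ℕ) + 1 : ℤ) ≤ M ∧ ((k:ℕ) + 1 : ℤ) ≤ M)
          then ((M:ℝ) - 2) * e j k else 0) := by
    intro j k
    by_cases hc : k ≠ j ∧ (((j:ℕ) + 1 : ℤ) ≤ M ∧ ((k:ℕ) + 1 : ℤ) ≤ M)
    · rw [if_pos hc]
      have hpt : ∀ i : Fin n, (if i ≠ j ∧ (k ≠ i ∧ k ≠ j) ∧ (((i:ℕ) + 1 : ℤ) ≤ M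
            ∧ ((j:ℕ) + 1 : ℤ) ≤ M ∧ ((k:ℕ) + 1 : ℤ) ≤ M) then e j k else 0)
          = ((if ((i:ℕ) + 1 : ℤ) ≤ M then (1:ℝ) else 0) - (if i = j then 1 else 0)
              - (if i = k then 1 else 0)) * e j k := by
        intro i
        by_cases h1 : i = j
        · subst h1
          rw [if_neg (fun hx => hx.1 rfl), if_pos hc.2.1, if_pos rfl,
            if_neg (fun hx : i = k => hc.1 (hx ▸ rfl))]
          ring
        · by_cases h2 : i = k
          · subst h2
            rw [if_neg (fun hx => hx.2.1.1 rfl), if_pos hc.2.2, if_neg h1, if_pos rfl]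
            ring
          · by_cases h3 : ((i:ℕ) + 1 : ℤ) ≤ M
            · rw [if_pos ⟨h1, ⟨fun hx => h2 hx.symm, hc.1⟩, h3, hc.2.1, hc.2.2⟩,
                if_pos h3, if_neg h1, if_neg h2]
              ring
            · rw [if_neg (fun hx => h3 hx.2.2.1), if_neg h3, if_neg h1, if_neg h2]
              ring
      rw [Finset.sum_congr rfl (fun i _ => hpt i)]
      rw [← Finset.sum_mul]
      congr 1
      rw [Finset.sum_sub_distrib, Finset.sum_sub_distrib]
      rw [aux_count M h0 hMn]
      rw [Finset.sum_ite_eq' Finset.univ j (fun _ => (1:ℝ)),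
        Finset.sum_ite_eq' Finset.univ k (fun _ => (1:ℝ))]
      simp only [Finset.mem_univ, if_true]
      ring
    · rw [if_neg hc]
      refine Finset.sum_eq_zero (fun i _ => ?_)
      rw [if_neg (fun hx => hc ⟨hx.2.1.2, hx.2.2.2.1, hx.2.2.2.2⟩)]
  rw [Finset.sum_congr rfl (fun j _ => Finset.sum_congr rfl (fun k _ => step3 j k))]
  have e1 : (∑ j : Fin n, ∑ k : Fin n,
        (if k ≠ j ∧ (((j:ℕ) + 1 : ℤ) ≤ M ∧ ((k:ℕ) + 1 : ℤ) ≤ M)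
          then ((M:ℝ) - 2) * e j k else 0))
      = (∑ j : Fin n, ∑ k : Fin n,
          (if j < k ∧ (((j:ℕ) + 1 : ℤ) ≤ M ∧ ((k:ℕ) + 1 : ℤ) ≤ M)
            then ((M:ℝ) - 2) * e j k else 0))
        + (∑ j : Fin n, ∑ k : Fin n,
          (if k < j ∧ (((j:ℕ) + 1 : ℤ) ≤ M ∧ ((k:ℕ) + 1 : ℤ) ≤ M)
            then ((M:ℝ) - 2) * e j k else 0)) := by
    rw [← Finset.sum_add_distrib]
    refine Finset.sum_congr rfl (fun j _ => ?_)
    rw [← Finset.sum_add_distrib]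
    refine Finset.sum_congr rfl (fun k _ => ?_)
    exact (aux_tri2 _ _ _ ((((j:ℕ) + 1 : ℤ) ≤ M ∧ ((k:ℕ) + 1 : ℤ) ≤ M))
      Iff.rfl Iff.rfl (by tauto) (((M:ℝ) - 2) * e j k)).symm
  have e2 : (∑ j : Fin n, ∑ k : Fin n,
        (if k < j ∧ (((j:ℕ) + 1 : ℤ) ≤ M ∧ ((k:ℕ) + 1 : ℤ) ≤ M)
          then ((M:ℝ) - 2) * e j k else 0))
      = (∑ j : Fin n, ∑ k : Fin n,
          (if j < k ∧ (((j:ℕ) + 1 : ℤ) ≤ M ∧ ((k:ℕ) + 1 : ℤ) ≤ M)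
            then ((M:ℝ) - 2) * e j k else 0)) := by
    rw [Finset.sum_comm]
    refine Finset.sum_congr rfl (fun j _ => Finset.sum_congr rfl (fun k _ => ?_))
    exact if_congr (by tauto) (by rw [hsym k j]) rfl
  have e3 : (∑ j : Fin n, ∑ k : Fin n,
        (if j < k ∧ (((j:ℕ) + 1 : ℤ) ≤ M ∧ ((k:ℕ) + 1 : ℤ) ≤ M)
          then ((M:ℝ) - 2) * e j k else 0))
      = ((M:ℝ) - 2) * ∑ i : Fin n, ∑ j : Fin n,
          if (i:ℕ) < (j:ℕ) ∧ ((j:ℕ) + 1 : ℤ) ≤ M then e i j else 0 := by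
    rw [Finset.mul_sum]
    refine Finset.sum_congr rfl (fun j _ => ?_)
    rw [Finset.mul_sum]
    refine Finset.sum_congr rfl (fun k _ => ?_)
    rw [mul_ite, mul_zero]
    refine if_congr ?_ rfl rfl
    rw [Fin.lt_def]
    constructor
    · rintro ⟨h1, _, h3⟩; exact ⟨h1, h3⟩
    · rintro ⟨h1, h2⟩; exact ⟨h1, by omega, h2⟩
  rw [e1, e2, e3]; ring

/-- The rescaled two-star process
`V_n(t) = (1/(2n²)) Σ_{i,j,k ≤ ⌊nt⌋ distinct} I_{i,j} I_{j,k}`. -/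
noncomputable def Vproc {Ω : Type*} (n : ℕ) (E : Fin n → Fin n → Ω → ℝ)
    (ω : Ω) (t : ℝ) : ℝ :=
  (1 / (2 * (n : ℝ) ^ 2)) *
    ∑ i : Fin n, ∑ j : Fin n, ∑ k : Fin n,
      if i ≠ j ∧ j ≠ k ∧ i ≠ k
          ∧ ((i : ℕ) + 1 : ℤ) ≤ ⌊(n : ℝ) * t⌋
          ∧ ((j : ℕ) + 1 : ℤ) ≤ ⌊(n : ℝ) * t⌋
          ∧ ((k : ℕ) + 1 : ℤ) ≤ ⌊(n : ℝ) * t⌋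
        then E i j ω * E j k ω else 0

/-- The resampled version `V'_n` of `V_n`, where the edge at the random pair
`(I,J) = pr ω` is replaced by the independent Bernoulli variable `E' ω`. -/
noncomputable def Vproc' {Ω : Type*} (n : ℕ) (E : Fin n → Fin n → Ω → ℝ)
    (pr : Ω → {q : Fin n × Fin n // q.1 < q.2}) (E' : Ω → ℝ) (ω : Ω) (t : ℝ) : ℝ :=
  Vproc n E ω t
    - (1 / (n : ℝ) ^ 2) *
        ∑ k : Fin n,
          if k ≠ (pr ω).1.1 ∧ k ≠ (pr ω).1.2 then
            (E (pr ω).1.1 (pr ω).1.2 ω - E' ω) *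
              (E (pr ω).1.2 k ω + E (pr ω).1.1 k ω) *
              (if max (max ((((pr ω).1.1 : ℕ) + 1 : ℝ) / (n : ℝ))
                    ((((pr ω).1.2 : ℕ) + 1 : ℝ) / (n : ℝ)))
                  (((k : ℕ) + 1 : ℝ) / (n : ℝ)) ≤ t then 1 else 0)
          else 0

noncomputable def auxInd (n : ℕ) (t : ℝ) (a b c : Fin n) : ℝ :=
  if max (max (((a:ℕ) + 1 : ℝ) / (n : ℝ)) (((b:ℕ) + 1 : ℝ) / (n : ℝ)))
      (((c:ℕ) + 1 : ℝ) / (n : ℝ)) ≤ t then 1 else 0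

noncomputable def auxA {Ω : Type*} (n : ℕ) (E : Fin n → Fin n → Ω → ℝ) (t : ℝ)
    (q : {q : Fin n × Fin n // q.1 < q.2}) (ω : Ω) : ℝ :=
  ∑ k : Fin n, if k ≠ q.1.1 ∧ k ≠ q.1.2 then
    E q.1.1 q.1.2 ω * (E q.1.2 k ω + E q.1.1 k ω) * auxInd n t q.1.1 q.1.2 k else 0

noncomputable def auxB {Ω : Type*} (n : ℕ) (E : Fin n → Fin n → Ω → ℝ) (t : ℝ)
    (q : {q : Fin n × Fin n // q.1 < q.2}) (ω : Ω) : ℝ :=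
  ∑ k : Fin n, if k ≠ q.1.1 ∧ k ≠ q.1.2 then
    (E q.1.2 k ω + E q.1.1 k ω) * auxInd n t q.1.1 q.1.2 k else 0

lemma aux_decomp {Ω : Type*} (n : ℕ) (E : Fin n → Fin n → Ω → ℝ)
    (pr : Ω → {q : Fin n × Fin n // q.1 < q.2}) (E' : Ω → ℝ) (t : ℝ) (ω : Ω) :
    Vproc n E ω t - Vproc' n E pr E' ω t
      = ∑ q : {q : Fin n × Fin n // q.1 < q.2},
          ((1 / (n : ℝ) ^ 2) * (auxA n E t q ω * (if pr ω = q then (1:ℝ) else 0))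
            - (1 / (n : ℝ) ^ 2) * (auxB n E t q ω
                * ((if pr ω = q then (1:ℝ) else 0) * E' ω))) := by
  have h0 : Vproc n E ω t - Vproc' n E pr E' ω t
      = (1 / (n : ℝ) ^ 2) * ∑ k : Fin n,
          (if k ≠ (pr ω).1.1 ∧ k ≠ (pr ω).1.2 then
            (E (pr ω).1.1 (pr ω).1.2 ω - E' ω) *
              (E (pr ω).1.2 k ω + E (pr ω).1.1 k ω) *
              auxInd n t (pr ω).1.1 (pr ω).1.2 k else 0) := by
    unfold Vproc' auxInd; ring
  rw [h0]
  rw [Finset.sum_eq_single (pr ω)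
    (fun q _ hq => by rw [if_neg (fun h => hq h.symm)]; ring)
    (fun h => absurd (Finset.mem_univ _) h)]
  rw [if_pos rfl]
  have h1 : ∀ k : Fin n, (if k ≠ (pr ω).1.1 ∧ k ≠ (pr ω).1.2 then
        (E (pr ω).1.1 (pr ω).1.2 ω - E' ω) *
          (E (pr ω).1.2 k ω + E (pr ω).1.1 k ω) *
          auxInd n t (pr ω).1.1 (pr ω).1.2 k else 0)
      = (if k ≠ (pr ω).1.1 ∧ k ≠ (pr ω).1.2 then
          E (pr ω).1.1 (pr ω).1.2 ω * (E (pr ω).1.2 k ω + E (pr ω).1.1 k ω) *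
            auxInd n t (pr ω).1.1 (pr ω).1.2 k else 0)
        - E' ω * (if k ≠ (pr ω).1.1 ∧ k ≠ (pr ω).1.2 then
            (E (pr ω).1.2 k ω + E (pr ω).1.1 k ω) *
              auxInd n t (pr ω).1.1 (pr ω).1.2 k else 0) := by
    intro k; split_ifs <;> ring
  rw [Finset.sum_congr rfl (fun k _ => h1 k), Finset.sum_sub_distrib, ← Finset.mul_sum]
  unfold auxA auxB
  ring

set_option maxHeartbeats 2000000 in
/-- Conditional linearity for the two-star exchangeable pair:
`E[V_n(t) - V'_n(t) | G] = (2/C(n,2))(V_n(t) - E V_n(t)) - (2p/C(n,2))(T_n(t) - E T_n(t))`. -/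
theorem stmt10 {Ω : Type*} [MeasurableSpace Ω] (μ : Measure Ω) [IsProbabilityMeasure μ]
    (n : ℕ) (hn : 3 ≤ n) (p : ℝ) (hp : p ∈ Set.Ioo (0 : ℝ) 1)
    (E : Fin n → Fin n → Ω → ℝ) (hEm : ∀ i j, Measurable (E i j))
    (hsym : ∀ i j, E j i = E i j) (hdiag : ∀ i ω, E i i ω = 0)
    (h01 : ∀ i j ω, E i j ω = 0 ∨ E i j ω = 1)
    (hber : ∀ i j : Fin n, i < j → μ {ω | E i j ω = 1} = ENNReal.ofReal p)
    (hind : iIndepFun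
      (fun q : {q : Fin n × Fin n // q.1 < q.2} => E q.1.1 q.1.2) μ)
    (pr : Ω → {q : Fin n × Fin n // q.1 < q.2}) (hprm : Measurable pr)
    (hpru : ∀ q, μ (pr ⁻¹' {q}) = (((n * (n - 1) / 2 : ℕ)) : ℝ≥0∞)⁻¹)
    (E' : Ω → ℝ) (hE'm : Measurable E')
    (hE'01 : ∀ ω, E' ω = 0 ∨ E' ω = 1) (hE'p : μ {ω | E' ω = 1} = ENNReal.ofReal p)
    (hindPair : IndepFun (fun ω => (pr ω, E' ω))
      (fun ω (q : Fin n × Fin n) => E q.1 q.2 ω) μ)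
    (hindPrE' : IndepFun pr E' μ)
    (t : ℝ) (ht : t ∈ Set.Icc (0 : ℝ) 1) :
    μ[fun ω => Vproc n E ω t - Vproc' n E pr E' ω t
        | MeasurableSpace.comap (fun ω (q : Fin n × Fin n) => E q.1 q.2 ω) inferInstance]
      =ᵐ[μ] fun ω =>
        (2 / ((n : ℝ) * ((n : ℝ) - 1) / 2)) *
            (Vproc n E ω t - ∫ ω', Vproc n E ω' t ∂μ)
          - (2 * p / ((n : ℝ) * ((n : ℝ) - 1) / 2)) *
            (Tproc n E ω t - ∫ ω', Tproc n E ω' t ∂μ) := by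
  obtain ⟨hp0, hp1⟩ := hp
  obtain ⟨ht0, ht1⟩ := ht
  have hn0 : (0:ℝ) < (n:ℝ) := by
    have h : 0 < n := by omega
    exact_mod_cast h
  set M : ℤ := ⌊(n : ℝ) * t⌋ with hMdef
  have hM0 : 0 ≤ M := Int.floor_nonneg.mpr (by positivity)
  have hMn : M ≤ (n:ℤ) := by
    rw [hMdef]
    calc ⌊(n : ℝ) * t⌋ ≤ ⌊(n : ℝ)⌋ := Int.floor_le_floor (by nlinarith)
      _ = (n:ℤ) := Int.floor_natCast n
  have hind_eq : ∀ a b c : Fin n, auxInd n t a b c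
      = (if (((a:ℕ) + 1 : ℤ) ≤ M ∧ ((b:ℕ) + 1 : ℤ) ≤ M ∧ ((c:ℕ) + 1 : ℤ) ≤ M)
          then (1:ℝ) else 0) := by
    have h : ∀ x : ℕ, ((x:ℝ) + 1) / (n:ℝ) ≤ t ↔ ((x:ℤ) + 1 : ℤ) ≤ M := by
      intro x
      rw [div_le_iff₀ hn0, hMdef, Int.le_floor]
      push_cast
      rw [mul_comm]
    intro a b c
    unfold auxInd
    refine if_congr ?_ rfl rfl
    rw [max_le_iff, max_le_iff, h (a:ℕ), h (b:ℕ), h (c:ℕ)]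
    tauto
  -- basic bounds
  have hE01' : ∀ i j ω, 0 ≤ E i j ω ∧ E i j ω ≤ 1 := by
    intro i j ω; rcases h01 i j ω with h | h <;> rw [h] <;> norm_num
  have hEabs : ∀ i j ω, |E i j ω| ≤ 1 := by
    intro i j ω; rcases hE01' i j ω with ⟨h1, h2⟩; rw [abs_le]; constructor <;> linarith
  have hEint : ∀ i j, Integrable (E i j) μ := fun i j => aux_int μ _ 1 (hEm i j) (hEabs i j)
  have hIabs : ∀ a b c : Fin n, 0 ≤ auxInd n t a b c ∧ auxInd n t a b c ≤ 1 := by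
    intro a b c; unfold auxInd; split_ifs <;> norm_num
  -- single-edge expectations
  have hEp : ∀ i j : Fin n, i ≠ j → ∫ ω, E i j ω ∂μ = p := by
    intro i j hij
    rcases lt_or_gt_of_ne hij with h | h
    · exact aux_integral_01 μ _ (hEm i j) (h01 i j) p (le_of_lt hp0) (hber i j h)
    · rw [hsym j i]
      exact aux_integral_01 μ _ (hEm j i) (h01 j i) p (le_of_lt hp0) (hber j i h)
  -- product expectations for distinct edges
  have hmul : ∀ a b c d : Fin n, a < b → c < d → ((a,b) : Fin n × Fin n) ≠ (c,d) →
      ∫ ω, E a b ω * E c d ω ∂μ = p * p := by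
    intro a b c d hab hcd hne
    have hif : IndepFun (E a b) (E c d) μ := by
      have h := hind.indepFun (i := ⟨(a,b), hab⟩) (j := ⟨(c,d), hcd⟩)
        (by simp only [ne_eq, Subtype.mk.injEq]; exact hne)
      exact h
    calc ∫ ω, E a b ω * E c d ω ∂μ = ∫ ω, (E a b * E c d) ω ∂μ := rfl
      _ = (∫ ω, E a b ω ∂μ) * ∫ ω, E c d ω ∂μ :=
          hif.integral_mul_eq_mul_integral (hEint a b).aestronglyMeasurable (hEint c d).aestronglyMeasurable
      _ = p * p := by rw [hEp a b (ne_of_lt hab), hEp c d (ne_of_lt hcd)]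
  have hmulgen : ∀ (a b u : Fin n), a < b → u ≠ a → u ≠ b →
      (∫ ω, E a b ω * E b u ω ∂μ = p * p) ∧ (∫ ω, E a b ω * E a u ω ∂μ = p * p) := by
    intro a b u hab hua hub
    constructor
    · rcases lt_or_gt_of_ne (Ne.symm hub) with h | h
      · exact hmul a b b u hab h
          (by intro hq; rw [Prod.mk.injEq] at hq; exact (ne_of_lt hab) hq.1)
      · rw [show E b u = E u b from hsym u b]
        exact hmul a b u b hab h
          (by intro hq; rw [Prod.mk.injEq] at hq; exact hua hq.1.symm)
    · rcases lt_or_gt_of_ne (Ne.symm hua) with h | h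
      · exact hmul a b a u hab h
          (by intro hq; rw [Prod.mk.injEq] at hq; exact hub hq.2.symm)
      · rw [show E a u = E u a from hsym u a]
        exact hmul a b u a hab h
          (by intro hq; rw [Prod.mk.injEq] at hq; exact hua hq.1.symm)
  -- measurability and bounds for auxA, auxB
  have hAm : ∀ q, Measurable (auxA n E t q) := by
    intro q; unfold auxA
    apply Finset.measurable_sum
    intro k _
    split_ifs
    · exact ((hEm _ _).mul ((hEm _ _).add (hEm _ _))).mul_const _
    · exact measurable_const
  have hBm : ∀ q, Measurable (auxB n E t q) := by
    intro q; unfold auxB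
    apply Finset.measurable_sum
    intro k _
    split_ifs
    · exact ((hEm _ _).add (hEm _ _)).mul_const _
    · exact measurable_const
  have hAb : ∀ q ω, |auxA n E t q ω| ≤ (n:ℝ) * 2 := by
    intro q ω; unfold auxA
    refine aux_sum_bound _ 2 (fun k => ?_)
    split_ifs with h
    · obtain ⟨h1a, h1b⟩ := hE01' q.1.1 q.1.2 ω
      obtain ⟨h2a, h2b⟩ := hE01' q.1.2 k ω
      obtain ⟨h3a, h3b⟩ := hE01' q.1.1 k ω
      obtain ⟨h4a, h4b⟩ := hIabs q.1.1 q.1.2 k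
      rw [abs_of_nonneg (mul_nonneg (mul_nonneg h1a (add_nonneg h2a h3a)) h4a)]
      have hyz : E q.1.1 q.1.2 ω * (E q.1.2 k ω + E q.1.1 k ω) ≤ 2 := by nlinarith
      have hyznn : 0 ≤ E q.1.1 q.1.2 ω * (E q.1.2 k ω + E q.1.1 k ω) :=
        mul_nonneg h1a (add_nonneg h2a h3a)
      exact le_trans (mul_le_of_le_one_right hyznn h4b) hyz
    · norm_num
  have hBb : ∀ q ω, |auxB n E t q ω| ≤ (n:ℝ) * 2 := by
    intro q ω; unfold auxB
    refine aux_sum_bound _ 2 (fun k => ?_)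
    split_ifs with h
    · obtain ⟨h2a, h2b⟩ := hE01' q.1.2 k ω
      obtain ⟨h3a, h3b⟩ := hE01' q.1.1 k ω
      obtain ⟨h4a, h4b⟩ := hIabs q.1.1 q.1.2 k
      rw [abs_of_nonneg (mul_nonneg (add_nonneg h2a h3a) h4a)]
      exact le_trans (mul_le_of_le_one_right (add_nonneg h2a h3a) h4b) (by linarith)
    · norm_num
  have hAint : ∀ q, Integrable (auxA n E t q) μ := fun q => aux_int μ _ _ (hAm q) (hAb q)
  have hBint : ∀ q, Integrable (auxB n E t q) μ := fun q => aux_int μ _ _ (hBm q) (hBb q)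
  -- the normalizing constant
  have hCnat : ((n * (n - 1) / 2 : ℕ) : ℝ) = (n:ℝ) * ((n:ℝ) - 1) / 2 := by
    have he : 2 ∣ n * (n - 1) := by
      rcases Nat.even_or_odd n with h | h
      · exact Dvd.dvd.mul_right h.two_dvd _
      · have h2 : Even (n - 1) := by
          rcases h with ⟨m, hm⟩; exact ⟨m, by omega⟩
        exact Dvd.dvd.mul_left h2.two_dvd _
    have h3 : (n * (n-1) / 2) * 2 = n * (n-1) := Nat.div_mul_cancel he
    have h4 : ((n * (n - 1) / 2 : ℕ) : ℝ) * 2 = (n:ℝ) * ((n:ℝ) - 1) := by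
      calc ((n * (n - 1) / 2 : ℕ) : ℝ) * 2 = ((n * (n-1) / 2 * 2 : ℕ) : ℝ) := by push_cast; ring
        _ = ((n * (n - 1) : ℕ) : ℝ) := by rw [h3]
        _ = (n:ℝ) * ((n:ℝ) - 1) := by
            rw [Nat.cast_mul, Nat.cast_sub (by omega : 1 ≤ n)]; push_cast; ring
    linarith
  have hn3 : (3:ℝ) ≤ (n:ℝ) := by exact_mod_cast hn
  have hCpos : (0:ℝ) < (n:ℝ) * ((n:ℝ) - 1) / 2 := by nlinarith
  set cC : ℝ := ((n * (n - 1) / 2 : ℕ) : ℝ)⁻¹ with hcCdef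
  have hcC : cC = ((n:ℝ) * ((n:ℝ) - 1) / 2)⁻¹ := by rw [hcCdef, hCnat]
  -- chi integrals
  have hχm : ∀ q : {q : Fin n × Fin n // q.1 < q.2},
      Measurable (fun ω => if pr ω = q then (1:ℝ) else 0) := by
    intro q
    exact Measurable.ite (hprm (measurableSet_singleton q)) measurable_const measurable_const
  have hχb : ∀ (q : {q : Fin n × Fin n // q.1 < q.2}) ω,
      |if pr ω = q then (1:ℝ) else 0| ≤ 1 := by
    intro q ω; split_ifs <;> norm_num
  have hχint : ∀ q : {q : Fin n × Fin n // q.1 < q.2},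
      Integrable (fun ω => if pr ω = q then (1:ℝ) else 0) μ :=
    fun q => aux_int μ _ 1 (hχm q) (hχb q)
  have hχval : ∀ q : {q : Fin n × Fin n // q.1 < q.2},
      ∫ ω, (if pr ω = q then (1:ℝ) else 0) ∂μ = cC := by
    intro q
    have hfi : (fun ω => if pr ω = q then (1:ℝ) else 0)
        = Set.indicator (pr ⁻¹' {q}) (1 : Ω → ℝ) := by
      funext ω; by_cases h : pr ω = q <;> simp [Set.indicator, h]
    rw [hfi, integral_indicator_one (hprm (measurableSet_singleton q)), measureReal_def, hpru q,
      hcCdef, ENNReal.toReal_inv, ENNReal.toReal_natCast]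
  have hE'val : ∫ ω, E' ω ∂μ = p :=
    aux_integral_01 μ E' hE'm hE'01 p (le_of_lt hp0) hE'p
  have hE'int : Integrable E' μ := aux_int μ _ 1 hE'm (fun ω => by
    rcases hE'01 ω with h | h <;> rw [h] <;> norm_num)
  have hχE'val : ∀ q : {q : Fin n × Fin n // q.1 < q.2},
      ∫ ω, (if pr ω = q then (1:ℝ) else 0) * E' ω ∂μ = cC * p := by
    intro q
    have hφ : Measurable (fun r : {q : Fin n × Fin n // q.1 < q.2} =>
        if r = q then (1:ℝ) else 0) :=
      Measurable.ite (measurableSet_singleton q) measurable_const measurable_const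
    have hifun : IndepFun (fun ω => if pr ω = q then (1:ℝ) else 0) E' μ :=
      hindPrE'.comp hφ measurable_id
    calc ∫ ω, (if pr ω = q then (1:ℝ) else 0) * E' ω ∂μ
        = ∫ ω, ((fun ω => if pr ω = q then (1:ℝ) else 0) * E') ω ∂μ := rfl
      _ = (∫ ω, (if pr ω = q then (1:ℝ) else 0) ∂μ) * ∫ ω, E' ω ∂μ :=
          hifun.integral_mul_eq_mul_integral (hχint q).aestronglyMeasurable hE'int.aestronglyMeasurable
      _ = cC * p := by rw [hχval q, hE'val]
  -- the sigma-algebra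
  set X : Ω → (Fin n × Fin n) → ℝ := fun ω q => E q.1 q.2 ω with hXdef
  have hXm : Measurable X := measurable_pi_lambda _ (fun q => hEm q.1 q.2)
  have hGle : MeasurableSpace.comap X inferInstance ≤ _ := hXm.comap_le
  haveI : SigmaFinite (μ.trim hGle) := inferInstance
  have hXG : Measurable[MeasurableSpace.comap X inferInstance] X :=
    Measurable.of_comap_le le_rfl
  have hAsm : ∀ q, StronglyMeasurable[MeasurableSpace.comap X inferInstance] (auxA n E t q) := by
    intro q
    have hg : Measurable (fun x : (Fin n × Fin n) → ℝ => ∑ k : Fin n,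
        if k ≠ q.1.1 ∧ k ≠ q.1.2 then
          x (q.1.1, q.1.2) * (x (q.1.2, k) + x (q.1.1, k)) * auxInd n t q.1.1 q.1.2 k
        else 0) := by
      apply Finset.measurable_sum
      intro k _
      split_ifs
      · exact ((measurable_pi_apply (q.1.1, q.1.2)).mul
          ((measurable_pi_apply (q.1.2, k)).add (measurable_pi_apply (q.1.1, k)))).mul_const _
      · exact measurable_const
    exact (hg.comp hXG).stronglyMeasurable
  have hBsm : ∀ q, StronglyMeasurable[MeasurableSpace.comap X inferInstance] (auxB n E t q) := by
    intro q
    have hg : Measurable (fun x : (Fin n × Fin n) → ℝ => ∑ k : Fin n,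
        if k ≠ q.1.1 ∧ k ≠ q.1.2 then
          (x (q.1.2, k) + x (q.1.1, k)) * auxInd n t q.1.1 q.1.2 k
        else 0) := by
      apply Finset.measurable_sum
      intro k _
      split_ifs
      · exact ((measurable_pi_apply (q.1.2, k)).add (measurable_pi_apply (q.1.1, k))).mul_const _
      · exact measurable_const
    exact (hg.comp hXG).stronglyMeasurable
  -- conditional expectations of chi and chi*E'
  have hceχ : ∀ q : {q : Fin n × Fin n // q.1 < q.2},
      μ[(fun ω => if pr ω = q then (1:ℝ) else 0) | MeasurableSpace.comap X inferInstance]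
        =ᵐ[μ] fun _ => cC := by
    intro q
    have hφ : Measurable (fun y : {q : Fin n × Fin n // q.1 < q.2} × ℝ =>
        if y.1 = q then (1:ℝ) else 0) :=
      Measurable.ite (measurable_fst (measurableSet_singleton q))
        measurable_const measurable_const
    have h2 : IndepFun (fun ω => if pr ω = q then (1:ℝ) else 0) X μ :=
      hindPair.comp hφ measurable_id
    have h3 := condExp_indep_eq ((hχm q).comap_le) hGle
      ((Measurable.of_comap_le le_rfl :
        Measurable[MeasurableSpace.comap (fun ω => if pr ω = q then (1:ℝ) else 0)
          inferInstance] _).stronglyMeasurable)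
      ((IndepFun_iff_Indep _ _ _).mp h2)
    refine h3.trans ?_
    rw [hχval q]
  have hceχE' : ∀ q : {q : Fin n × Fin n // q.1 < q.2},
      μ[(fun ω => (if pr ω = q then (1:ℝ) else 0) * E' ω)
          | MeasurableSpace.comap X inferInstance] =ᵐ[μ] fun _ => cC * p := by
    intro q
    have hφ : Measurable (fun y : {q : Fin n × Fin n // q.1 < q.2} × ℝ =>
        (if y.1 = q then (1:ℝ) else 0) * y.2) :=
      (Measurable.ite (measurable_fst (measurableSet_singleton q))
        measurable_const measurable_const).mul measurable_snd
    have h2 : IndepFun (fun ω => (if pr ω = q then (1:ℝ) else 0) * E' ω) X μ :=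
      hindPair.comp hφ measurable_id
    have hm2 : Measurable (fun ω => (if pr ω = q then (1:ℝ) else 0) * E' ω) :=
      (hχm q).mul hE'm
    have h3 := condExp_indep_eq (hm2.comap_le) hGle
      ((Measurable.of_comap_le le_rfl :
        Measurable[MeasurableSpace.comap (fun ω => (if pr ω = q then (1:ℝ) else 0) * E' ω)
          inferInstance] _).stronglyMeasurable)
      ((IndepFun_iff_Indep _ _ _).mp h2)
    refine h3.trans ?_
    have : ∫ ω, (if pr ω = q then (1:ℝ) else 0) * E' ω ∂μ = cC * p := hχE'val q
    rw [this]
  -- integrability of products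
  have hχE'int : ∀ q : {q : Fin n × Fin n // q.1 < q.2},
      Integrable (fun ω => (if pr ω = q then (1:ℝ) else 0) * E' ω) μ := by
    intro q
    refine aux_int μ _ 1 ((hχm q).mul hE'm) (fun ω => ?_)
    rw [abs_mul]
    have h1 := hχb q ω
    have h2 : |E' ω| ≤ 1 := by rcases hE'01 ω with h | h <;> rw [h] <;> norm_num
    nlinarith [abs_nonneg (if pr ω = q then (1:ℝ) else 0), abs_nonneg (E' ω)]
  have hAχint : ∀ q : {q : Fin n × Fin n // q.1 < q.2},
      Integrable (auxA n E t q * fun ω => if pr ω = q then (1:ℝ) else 0) μ := by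
    intro q
    refine aux_int μ _ ((n:ℝ) * 2) ((hAm q).mul (hχm q)) (fun ω => ?_)
    rw [Pi.mul_apply, abs_mul]
    have h1 := hAb q ω
    have h2 := hχb q ω
    nlinarith [abs_nonneg (auxA n E t q ω)]
  have hBχE'int : ∀ q : {q : Fin n × Fin n // q.1 < q.2},
      Integrable (auxB n E t q * fun ω => (if pr ω = q then (1:ℝ) else 0) * E' ω) μ := by
    intro q
    refine aux_int μ _ ((n:ℝ) * 2) ((hBm q).mul ((hχm q).mul hE'm)) (fun ω => ?_)
    rw [Pi.mul_apply, abs_mul, abs_mul]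
    have h1 := hBb q ω
    have h2 := hχb q ω
    have h3 : |E' ω| ≤ 1 := by rcases hE'01 ω with h | h <;> rw [h] <;> norm_num
    have h4 : |if pr ω = q then (1:ℝ) else 0| * |E' ω| ≤ 1 :=
      le_trans (mul_le_of_le_one_right (abs_nonneg _) h3) h2
    exact le_trans (mul_le_of_le_one_right (abs_nonneg _) h4) h1
  -- per-q conditional expectation
  have hkey : ∀ q : {q : Fin n × Fin n // q.1 < q.2},
      μ[(fun ω => (1 / (n : ℝ) ^ 2) * (auxA n E t q ω * (if pr ω = q then (1:ℝ) else 0))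
          - (1 / (n : ℝ) ^ 2) * (auxB n E t q ω
              * ((if pr ω = q then (1:ℝ) else 0) * E' ω)))
        | MeasurableSpace.comap X inferInstance]
      =ᵐ[μ] (fun ω => (1 / (n : ℝ) ^ 2) * (auxA n E t q ω * cC)
          - (1 / (n : ℝ) ^ 2) * (auxB n E t q ω * (cC * p))) := by
    intro q
    have hrw : (fun ω => (1 / (n : ℝ) ^ 2)
          * (auxA n E t q ω * (if pr ω = q then (1:ℝ) else 0))
        - (1 / (n : ℝ) ^ 2) * (auxB n E t q ω
            * ((if pr ω = q then (1:ℝ) else 0) * E' ω)))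
        = ((1 / (n : ℝ) ^ 2) • (auxA n E t q * fun ω => if pr ω = q then (1:ℝ) else 0)
          - (1 / (n : ℝ) ^ 2) • (auxB n E t q
              * fun ω => (if pr ω = q then (1:ℝ) else 0) * E' ω)) := by
      funext ω; simp [Pi.smul_apply, smul_eq_mul]
    rw [hrw]
    have hintAs : Integrable ((1 / (n : ℝ) ^ 2)
        • (auxA n E t q * fun ω => if pr ω = q then (1:ℝ) else 0)) μ :=
      (hAχint q).smul _
    have hintBs : Integrable ((1 / (n : ℝ) ^ 2)
        • (auxB n E t q * fun ω => (if pr ω = q then (1:ℝ) else 0) * E' ω)) μ :=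
      (hBχE'int q).smul _
    refine (condExp_sub hintAs hintBs _).trans ?_
    have hA1 := condExp_smul (μ := μ) (m := MeasurableSpace.comap X inferInstance)
      (1 / (n : ℝ) ^ 2) (auxA n E t q * fun ω => if pr ω = q then (1:ℝ) else 0)
    have hB1 := condExp_smul (μ := μ) (m := MeasurableSpace.comap X inferInstance)
      (1 / (n : ℝ) ^ 2) (auxB n E t q * fun ω => (if pr ω = q then (1:ℝ) else 0) * E' ω)
    refine (hA1.sub hB1).trans ?_
    have hA2 : μ[(auxA n E t q * fun ω => if pr ω = q then (1:ℝ) else 0)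
        | MeasurableSpace.comap X inferInstance]
        =ᵐ[μ] fun ω => auxA n E t q ω * cC := by
      refine (condExp_mul_of_stronglyMeasurable_left (hAsm q) (hAχint q) (hχint q)).trans ?_
      filter_upwards [hceχ q] with ω hω
      rw [Pi.mul_apply, hω]
    have hB2 : μ[(auxB n E t q * fun ω => (if pr ω = q then (1:ℝ) else 0) * E' ω)
        | MeasurableSpace.comap X inferInstance]
        =ᵐ[μ] fun ω => auxB n E t q ω * (cC * p) := by
      refine (condExp_mul_of_stronglyMeasurable_left (hBsm q) (hBχE'int q) (hχE'int q)).trans ?_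
      filter_upwards [hceχE' q] with ω hω
      rw [Pi.mul_apply, hω]
    filter_upwards [hA2, hB2] with ω h1 h2
    simp only [Pi.sub_apply, Pi.smul_apply, smul_eq_mul, h1, h2]
  -- rewrite the conditional expectation of the full difference
  have hFeq : (fun ω => Vproc n E ω t - Vproc' n E pr E' ω t)
      = ∑ q : {q : Fin n × Fin n // q.1 < q.2}, (fun ω =>
          (1 / (n : ℝ) ^ 2) * (auxA n E t q ω * (if pr ω = q then (1:ℝ) else 0))
            - (1 / (n : ℝ) ^ 2) * (auxB n E t q ω
                * ((if pr ω = q then (1:ℝ) else 0) * E' ω))) := by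
    funext ω
    rw [aux_decomp n E pr E' t ω, Finset.sum_apply]
  have hintq : ∀ q ∈ Finset.univ (α := {q : Fin n × Fin n // q.1 < q.2}),
      Integrable (fun ω =>
        (1 / (n : ℝ) ^ 2) * (auxA n E t q ω * (if pr ω = q then (1:ℝ) else 0))
          - (1 / (n : ℝ) ^ 2) * (auxB n E t q ω
              * ((if pr ω = q then (1:ℝ) else 0) * E' ω))) μ := by
    intro q _
    exact (((hAχint q).const_mul _).sub ((hBχE'int q).const_mul _))
  have hcesum := condExp_finsetSum (μ := μ) (m := MeasurableSpace.comap X inferInstance)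
    hintq
  have hcond : μ[fun ω => Vproc n E ω t - Vproc' n E pr E' ω t
        | MeasurableSpace.comap X inferInstance]
      =ᵐ[μ] fun ω => ∑ q : {q : Fin n × Fin n // q.1 < q.2},
        ((1 / (n : ℝ) ^ 2) * (auxA n E t q ω * cC)
          - (1 / (n : ℝ) ^ 2) * (auxB n E t q ω * (cC * p))) := by
    rw [hFeq]
    refine hcesum.trans ?_
    have hall : ∀ᵐ ω ∂μ, ∀ q : {q : Fin n × Fin n // q.1 < q.2},
        (μ[(fun ω => (1 / (n : ℝ) ^ 2) * (auxA n E t q ω * (if pr ω = q then (1:ℝ) else 0))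
            - (1 / (n : ℝ) ^ 2) * (auxB n E t q ω
                * ((if pr ω = q then (1:ℝ) else 0) * E' ω)))
          | MeasurableSpace.comap X inferInstance]) ω
        = (1 / (n : ℝ) ^ 2) * (auxA n E t q ω * cC)
            - (1 / (n : ℝ) ^ 2) * (auxB n E t q ω * (cC * p)) :=
      ae_all_iff.mpr hkey
    filter_upwards [hall] with ω hω
    rw [Finset.sum_apply]
    exact Finset.sum_congr rfl (fun q _ => hω q)
  -- pointwise combinatorial identities
  have hAsum : ∀ ω, (∑ q : {q : Fin n × Fin n // q.1 < q.2}, auxA n E t q ω)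
      = ∑ i : Fin n, ∑ j : Fin n, ∑ k : Fin n,
          if i ≠ j ∧ j ≠ k ∧ i ≠ k ∧ ((i:ℕ) + 1 : ℤ) ≤ M ∧ ((j:ℕ) + 1 : ℤ) ≤ M
              ∧ ((k:ℕ) + 1 : ℤ) ≤ M then E i j ω * E j k ω else 0 := by
    intro ω
    have h1 := aux_sumQ (fun i j => ∑ k : Fin n, if k ≠ i ∧ k ≠ j then
      E i j ω * (E j k ω + E i k ω) * auxInd n t i j k else 0)
    have h2 : (∑ q : {q : Fin n × Fin n // q.1 < q.2}, auxA n E t q ω)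
        = ∑ q : {q : Fin n × Fin n // q.1 < q.2}, (fun i j => ∑ k : Fin n,
            if k ≠ i ∧ k ≠ j then E i j ω * (E j k ω + E i k ω) * auxInd n t i j k else 0)
              q.1.1 q.1.2 := rfl
    rw [h2, h1]
    simp only [hind_eq]
    exact aux_comb1 (fun i j => E i j ω) (fun i j => congrFun (hsym i j) ω)
      (fun a => ((a:ℕ) + 1 : ℤ) ≤ M)
  have hBsum : ∀ ω, (∑ q : {q : Fin n × Fin n // q.1 < q.2}, auxB n E t q ω)
      = ((M:ℝ) - 2) * (2 * ∑ i : Fin n, ∑ j : Fin n,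
          if (i:ℕ) < (j:ℕ) ∧ ((j:ℕ) + 1 : ℤ) ≤ M then E i j ω else 0) := by
    intro ω
    have h1 := aux_sumQ (fun i j => ∑ k : Fin n, if k ≠ i ∧ k ≠ j then
      (E j k ω + E i k ω) * auxInd n t i j k else 0)
    have h2 : (∑ q : {q : Fin n × Fin n // q.1 < q.2}, auxB n E t q ω)
        = ∑ q : {q : Fin n × Fin n // q.1 < q.2}, (fun i j => ∑ k : Fin n,
            if k ≠ i ∧ k ≠ j then (E j k ω + E i k ω) * auxInd n t i j k else 0)
              q.1.1 q.1.2 := rfl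
    rw [h2, h1]
    simp only [hind_eq]
    exact aux_comb2 (fun i j => E i j ω) (fun i j => congrFun (hsym i j) ω) M hM0 hMn
  -- Vproc and Tproc in terms of the sums
  have hV : ∀ ω, Vproc n E ω t = (1 / (2 * (n:ℝ)^2)) * ∑ i : Fin n, ∑ j : Fin n, ∑ k : Fin n,
      if i ≠ j ∧ j ≠ k ∧ i ≠ k ∧ ((i:ℕ) + 1 : ℤ) ≤ M ∧ ((j:ℕ) + 1 : ℤ) ≤ M
          ∧ ((k:ℕ) + 1 : ℤ) ≤ M then E i j ω * E j k ω else 0 := fun ω => rfl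
  have hT : ∀ ω, Tproc n E ω t = (((M:ℤ):ℝ) - 2) / (n:ℝ)^2 * ∑ i : Fin n, ∑ j : Fin n,
      if (i:ℕ) < (j:ℕ) ∧ ((j:ℕ) + 1 : ℤ) ≤ M then E i j ω else 0 := fun ω => rfl
  -- pointwise identity Phi
  have hn2 : ((n:ℝ)^2) ≠ 0 := by positivity
  have hC0 : ((n:ℝ) * ((n:ℝ) - 1) / 2) ≠ 0 := ne_of_gt hCpos
  have hphi : ∀ ω, (2 / ((n : ℝ) * ((n : ℝ) - 1) / 2)) * Vproc n E ω t
        - (2 * p / ((n : ℝ) * ((n : ℝ) - 1) / 2)) * Tproc n E ω t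
      = ((1 / (n:ℝ)^2) * cC) * ∑ q : {q : Fin n × Fin n // q.1 < q.2},
          (auxA n E t q ω - p * auxB n E t q ω) := by
    intro ω
    have hnne : (n:ℝ) ≠ 0 := ne_of_gt hn0
    have hn1ne : (n:ℝ) - 1 ≠ 0 := by linarith
    rw [Finset.sum_sub_distrib, ← Finset.mul_sum, hAsum ω, hBsum ω, hV ω, hT ω, hcC]
    field_simp
  -- integral of the centered sum is zero
  have hint_if1 : ∀ (q : {q : Fin n × Fin n // q.1 < q.2}) (k : Fin n),
      Integrable (fun ω => if k ≠ q.1.1 ∧ k ≠ q.1.2 then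
        E q.1.1 q.1.2 ω * (E q.1.2 k ω + E q.1.1 k ω) * auxInd n t q.1.1 q.1.2 k else 0) μ := by
    intro q k
    refine aux_int μ _ 2 ?_ ?_
    · split_ifs
      · exact ((hEm _ _).mul ((hEm _ _).add (hEm _ _))).mul_const _
      · exact measurable_const
    · intro ω
      split_ifs
      · obtain ⟨h1a, h1b⟩ := hE01' q.1.1 q.1.2 ω
        obtain ⟨h2a, h2b⟩ := hE01' q.1.2 k ω
        obtain ⟨h3a, h3b⟩ := hE01' q.1.1 k ω
        obtain ⟨h4a, h4b⟩ := hIabs q.1.1 q.1.2 k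
        rw [abs_of_nonneg (mul_nonneg (mul_nonneg h1a (add_nonneg h2a h3a)) h4a)]
        have hyz : E q.1.1 q.1.2 ω * (E q.1.2 k ω + E q.1.1 k ω) ≤ 2 := by nlinarith
        have hyznn : 0 ≤ E q.1.1 q.1.2 ω * (E q.1.2 k ω + E q.1.1 k ω) :=
          mul_nonneg h1a (add_nonneg h2a h3a)
        exact le_trans (mul_le_of_le_one_right hyznn h4b) hyz
      · norm_num
  have hint_if2 : ∀ (q : {q : Fin n × Fin n // q.1 < q.2}) (k : Fin n),
      Integrable (fun ω => if k ≠ q.1.1 ∧ k ≠ q.1.2 then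
        (E q.1.2 k ω + E q.1.1 k ω) * auxInd n t q.1.1 q.1.2 k else 0) μ := by
    intro q k
    refine aux_int μ _ 2 ?_ ?_
    · split_ifs
      · exact ((hEm _ _).add (hEm _ _)).mul_const _
      · exact measurable_const
    · intro ω
      split_ifs
      · obtain ⟨h2a, h2b⟩ := hE01' q.1.2 k ω
        obtain ⟨h3a, h3b⟩ := hE01' q.1.1 k ω
        obtain ⟨h4a, h4b⟩ := hIabs q.1.1 q.1.2 k
        rw [abs_of_nonneg (mul_nonneg (add_nonneg h2a h3a) h4a)]
        exact le_trans (mul_le_of_le_one_right (add_nonneg h2a h3a) h4b) (by linarith)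
      · norm_num
  have hintEE : ∀ (a b c d : Fin n) (r : ℝ), Integrable (fun ω => r * (E a b ω * E c d ω)) μ := by
    intro a b c d r
    exact (((hEint a b).bdd_mul (c := 1) (hEm c d).aestronglyMeasurable
      (Filter.Eventually.of_forall fun ω => by rw [Real.norm_eq_abs]; exact hEabs c d ω)).const_mul r).congr
      (Filter.Eventually.of_forall (fun ω => by ring))
  have hintE1 : ∀ (a b : Fin n) (r : ℝ), Integrable (fun ω => r * E a b ω) μ :=
    fun a b r => (hEint a b).const_mul r
  have hD0 : ∫ ω, (∑ q : {q : Fin n × Fin n // q.1 < q.2},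
      (auxA n E t q ω - p * auxB n E t q ω)) ∂μ = 0 := by
    rw [integral_finset_sum Finset.univ
      (f := fun (q : {q : Fin n × Fin n // q.1 < q.2}) (ω : Ω) =>
        auxA n E t q ω - p * auxB n E t q ω)
      (fun q _ => (hAint q).sub ((hBint q).const_mul p))]
    refine Finset.sum_eq_zero (fun q _ => ?_)
    rw [integral_sub (hAint q) ((hBint q).const_mul p), integral_const_mul]
    unfold auxA auxB
    rw [integral_finset_sum _ (fun k _ => hint_if1 q k),
      integral_finset_sum _ (fun k _ => hint_if2 q k)]
    rw [Finset.mul_sum, ← Finset.sum_sub_distrib]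
    refine Finset.sum_eq_zero (fun k _ => ?_)
    by_cases hk : k ≠ q.1.1 ∧ k ≠ q.1.2
    · simp only [if_pos hk]
      obtain ⟨hpp1, hpp2⟩ := hmulgen q.1.1 q.1.2 k q.2 hk.1 hk.2
      have hrw1 : (fun ω => E q.1.1 q.1.2 ω * (E q.1.2 k ω + E q.1.1 k ω)
            * auxInd n t q.1.1 q.1.2 k)
          = fun ω => auxInd n t q.1.1 q.1.2 k * (E q.1.1 q.1.2 ω * E q.1.2 k ω)
            + auxInd n t q.1.1 q.1.2 k * (E q.1.1 q.1.2 ω * E q.1.1 k ω) := by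
        funext ω; ring
      have hrw2 : (fun ω => (E q.1.2 k ω + E q.1.1 k ω) * auxInd n t q.1.1 q.1.2 k)
          = fun ω => auxInd n t q.1.1 q.1.2 k * E q.1.2 k ω
            + auxInd n t q.1.1 q.1.2 k * E q.1.1 k ω := by
        funext ω; ring
      rw [hrw1, hrw2]
      rw [integral_add (hintEE _ _ _ _ _) (hintEE _ _ _ _ _),
        integral_add (hintE1 _ _ _) (hintE1 _ _ _),
        integral_const_mul, integral_const_mul, integral_const_mul, integral_const_mul]
      rw [hpp1, hpp2, hEp q.1.2 k (Ne.symm hk.2), hEp q.1.1 k (Ne.symm hk.1)]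
      ring
    · simp only [if_neg hk]
      simp
  -- integrability of Vproc and Tproc
  have hVm : Measurable (fun ω => Vproc n E ω t) := by
    unfold Vproc
    refine (Finset.measurable_sum _ (fun i _ => Finset.measurable_sum _
      (fun j _ => Finset.measurable_sum _ (fun k _ => ?_)))).const_mul _
    split_ifs
    · exact (hEm _ _).mul (hEm _ _)
    · exact measurable_const
  have hTm : Measurable (fun ω => Tproc n E ω t) := by
    unfold Tproc
    refine (Finset.measurable_sum _ (fun i _ => Finset.measurable_sum _
      (fun j _ => ?_))).const_mul _
    split_ifs
    · exact hEm _ _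
    · exact measurable_const
  have hVb : ∀ ω, |Vproc n E ω t| ≤ |1 / (2 * (n:ℝ)^2)| * ((n:ℝ) * ((n:ℝ) * ((n:ℝ) * 1))) := by
    intro ω
    unfold Vproc
    rw [abs_mul]
    refine mul_le_mul_of_nonneg_left ?_ (abs_nonneg _)
    refine aux_sum_bound _ _ (fun i => aux_sum_bound _ _ (fun j => aux_sum_bound _ 1
      (fun k => ?_)))
    split_ifs
    · obtain ⟨h1a, h1b⟩ := hE01' i j ω
      obtain ⟨h2a, h2b⟩ := hE01' j k ω
      rw [abs_of_nonneg (mul_nonneg h1a h2a)]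
      exact le_trans (mul_le_of_le_one_right h1a h2b) (by linarith)
    · norm_num
  have hTb : ∀ ω, |Tproc n E ω t| ≤ |(((M:ℤ):ℝ) - 2) / (n:ℝ)^2| * ((n:ℝ) * ((n:ℝ) * 1)) := by
    intro ω
    unfold Tproc
    rw [abs_mul]
    refine mul_le_mul_of_nonneg_left ?_ (abs_nonneg _)
    refine aux_sum_bound _ _ (fun i => aux_sum_bound _ 1 (fun j => ?_))
    split_ifs
    · exact hEabs i j ω
    · norm_num
  have hVint : Integrable (fun ω => Vproc n E ω t) μ := aux_int μ _ _ hVm hVb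
  have hTint : Integrable (fun ω => Tproc n E ω t) μ := aux_int μ _ _ hTm hTb
  -- the integral identity
  have hint0 : (2 / ((n : ℝ) * ((n : ℝ) - 1) / 2)) * (∫ ω', Vproc n E ω' t ∂μ)
      - (2 * p / ((n : ℝ) * ((n : ℝ) - 1) / 2)) * (∫ ω', Tproc n E ω' t ∂μ) = 0 := by
    have h1 : ∫ ω, ((2 / ((n : ℝ) * ((n : ℝ) - 1) / 2)) * Vproc n E ω t
          - (2 * p / ((n : ℝ) * ((n : ℝ) - 1) / 2)) * Tproc n E ω t) ∂μ
        = (2 / ((n : ℝ) * ((n : ℝ) - 1) / 2)) * (∫ ω', Vproc n E ω' t ∂μ)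
          - (2 * p / ((n : ℝ) * ((n : ℝ) - 1) / 2)) * (∫ ω', Tproc n E ω' t ∂μ) := by
      rw [integral_sub (hVint.const_mul _) (hTint.const_mul _),
        integral_const_mul, integral_const_mul]
    have h2 : ∫ ω, ((2 / ((n : ℝ) * ((n : ℝ) - 1) / 2)) * Vproc n E ω t
          - (2 * p / ((n : ℝ) * ((n : ℝ) - 1) / 2)) * Tproc n E ω t) ∂μ = 0 := by
      rw [show (fun ω => (2 / ((n : ℝ) * ((n : ℝ) - 1) / 2)) * Vproc n E ω t
          - (2 * p / ((n : ℝ) * ((n : ℝ) - 1) / 2)) * Tproc n E ω t)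
        = fun ω => ((1 / (n:ℝ)^2) * cC) * ∑ q : {q : Fin n × Fin n // q.1 < q.2},
            (auxA n E t q ω - p * auxB n E t q ω) from funext hphi]
      rw [integral_const_mul, hD0, mul_zero]
    linarith
  -- final assembly
  refine hcond.trans (Filter.EventuallyEq.of_eq ?_)
  funext ω
  have htarget : (∑ q : {q : Fin n × Fin n // q.1 < q.2},
        ((1 / (n : ℝ) ^ 2) * (auxA n E t q ω * cC)
          - (1 / (n : ℝ) ^ 2) * (auxB n E t q ω * (cC * p))))
      = ((1 / (n:ℝ)^2) * cC) * ∑ q : {q : Fin n × Fin n // q.1 < q.2},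
          (auxA n E t q ω - p * auxB n E t q ω) := by
    rw [Finset.mul_sum]
    exact Finset.sum_congr rfl (fun q _ => by ring)
  rw [htarget]
  have h3 := hphi ω
  linarith [hint0, h3]
end
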